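/- arXiv:0905.1185 — 7 statements merged into one kernel-verified Lean document; each statement's English description precedes it below -/
import Mathlib

section
/- For every finite group G, the number of group homomorphisms from the quaternion group Q₈ to G equals the number of pairs (g, h) ∈ G × G satisfying g⁻¹ * h * g * h = 1 and g * h⁻¹ * g * h = 1; that is, Nat.card (QuaternionGroup 2 →* G) = Nat.card {p : G × G | p.1⁻¹ * p.2 * p.1 * p.2 = 1 ∧ p.1 * p.2⁻¹ * p.1 * p.2 = 1}. -/
open QuaternionGroup

section Aux

variable {G : Type} [Group G]

private lemma pow_mod_four {g : G} (hg : g ^ 4 = 1) (m : ℕ) : g ^ m = g ^ (m % 4) := by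
  conv_lhs => rw [← Nat.div_add_mod m 4]
  rw [pow_add, pow_mul, hg, one_pow, one_mul]

private lemma quat_relations {g h : G}
    (c1 : g⁻¹ * h * g * h = 1) (c2 : g * h⁻¹ * g * h = 1) :
    h * h = g * g ∧ g ^ 4 = 1 ∧ g * h = h * g⁻¹ := by
  have e1 : h * g * h = g := by
    calc h * g * h = g * (g⁻¹ * h * g * h) := by group
    _ = g := by rw [c1]; group
  have t : g * h⁻¹ * g = h⁻¹ := by
    calc g * h⁻¹ * g = (g * h⁻¹ * g * h) * h⁻¹ := by group
    _ = h⁻¹ := by rw [c2]; group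
  have tinv : g⁻¹ * h * g⁻¹ = h := by
    calc g⁻¹ * h * g⁻¹ = (g * h⁻¹ * g)⁻¹ := by group
    _ = h := by rw [t]; group
  have e2 : g * h * g = h := by
    calc g * h * g = g * (g⁻¹ * h * g⁻¹) * g := by rw [tinv]
    _ = h := by group
  have h2 : h * h = g * g := by
    calc h * h = (g * h * g) * h := by rw [e2]
    _ = g * (h * g * h) := by group
    _ = g * g := by rw [e1]
  have gh : g * h = h * g⁻¹ := by
    calc g * h = (g * h * g) * g⁻¹ := by group
    _ = h * g⁻¹ := by rw [e2]
  have hc : g⁻¹ * h * g = h⁻¹ := by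
    calc g⁻¹ * h * g = (g⁻¹ * h * g * h) * h⁻¹ := by group
    _ = h⁻¹ := by rw [c1]; group
  have k : g⁻¹ * (h * h) * g = (h * h)⁻¹ := by
    calc g⁻¹ * (h * h) * g = (g⁻¹ * h * g) * (g⁻¹ * h * g) := by group
    _ = h⁻¹ * h⁻¹ := by rw [hc]
    _ = (h * h)⁻¹ := by group
  rw [h2] at k
  have g4 : g ^ 4 = 1 := by
    calc g ^ 4 = g ^ 2 * g ^ 2 := by rw [← pow_add]
    _ = (g * g) * (g⁻¹ * (g * g) * g) := by rw [pow_two]; group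
    _ = (g * g) * (g * g)⁻¹ := by rw [k]
    _ = 1 := by group
  exact ⟨h2, g4, gh⟩

private lemma pow_mul_h {g h : G} (gh : g * h = h * g⁻¹) (hg4 : g ^ 4 = 1) (m : ℕ) :
    g ^ m * h = h * g ^ (3 * m) := by
  have ginv : g⁻¹ = g ^ 3 := by
    calc g⁻¹ = g ^ 3 * (g ^ 4)⁻¹ := by group
    _ = g ^ 3 := by rw [hg4]; group
  induction m with
  | zero => simp
  | succ k ih =>
    calc g ^ (k + 1) * h = g ^ k * (g * h) := by rw [pow_succ, mul_assoc]
    _ = g ^ k * h * g⁻¹ := by rw [gh, mul_assoc]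
    _ = h * g ^ (3 * k) * g ^ 3 := by rw [ih, ginv]
    _ = h * g ^ (3 * (k + 1)) := by rw [mul_assoc, ← pow_add, Nat.mul_succ]

/-- The function underlying the homomorphism built from a pair. -/
private def quatFun (g h : G) : QuaternionGroup 2 → G
  | .a i => g ^ i.val
  | .xa i => h * g ^ i.val

private lemma quatFun_mul {g h : G}
    (c1 : g⁻¹ * h * g * h = 1) (c2 : g * h⁻¹ * g * h = 1) :
    ∀ x y : QuaternionGroup 2, quatFun g h (x * y) = quatFun g h x * quatFun g h y := by
  obtain ⟨h2, g4, gh⟩ := quat_relations c1 c2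
  have key1 : ∀ i j : ZMod (2 * 2), (i + j).val % 4 = (i.val + j.val) % 4 := by decide
  have key2 : ∀ i j : ZMod (2 * 2), (j - i).val % 4 = (3 * i.val + j.val) % 4 := by decide
  have key4 : ∀ i j : ZMod (2 * 2),
      (((2 : ℕ) : ZMod (2 * 2)) + j - i).val % 4 = (2 + (3 * i.val + j.val)) % 4 := by decide
  rintro (i | i) (j | j)
  · show g ^ (i + j).val = g ^ i.val * g ^ j.val
    rw [← pow_add, pow_mod_four g4 (i + j).val, pow_mod_four g4 (i.val + j.val), key1]
  · show h * g ^ (j - i).val = g ^ i.val * (h * g ^ j.val)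
    rw [← mul_assoc, pow_mul_h gh g4, mul_assoc, ← pow_add,
      pow_mod_four g4 (j - i).val, pow_mod_four g4 (3 * i.val + j.val), key2]
  · show h * g ^ (i + j).val = h * g ^ i.val * g ^ j.val
    rw [mul_assoc, ← pow_add, pow_mod_four g4 (i + j).val,
      pow_mod_four g4 (i.val + j.val), key1]
  · show g ^ (((2 : ℕ) : ZMod (2 * 2)) + j - i).val = (h * g ^ i.val) * (h * g ^ j.val)
    have expand : (h * g ^ i.val) * (h * g ^ j.val) = (h * h) * (g ^ (3 * i.val) * g ^ j.val) := by
      rw [mul_assoc h (g ^ i.val), ← mul_assoc (g ^ i.val), pow_mul_h gh g4]; group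
    rw [expand, h2]
    rw [show g * g * (g ^ (3 * i.val) * g ^ j.val) = g ^ (2 + (3 * i.val + j.val)) from by
      rw [pow_add, pow_add, pow_two]]
    rw [pow_mod_four g4 (((2 : ℕ) : ZMod (2 * 2)) + j - i).val,
      pow_mod_four g4 (2 + (3 * i.val + j.val)), key4]

end Aux

/-- For any finite group `G`, the number of group homomorphisms from the quaternion group
`Q₈` to `G` equals the number of pairs `(g, h)` in `G × G` with
`g⁻¹ * h * g * h = 1` and `g * h⁻¹ * g * h = 1`. -/
theorem card_hom_quaternionGroup_eq
    (G : Type) [Group G] [Fintype G] :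
    Nat.card (QuaternionGroup 2 →* G) =
      Nat.card {p : G × G | p.1⁻¹ * p.2 * p.1 * p.2 = 1 ∧ p.1 * p.2⁻¹ * p.1 * p.2 = 1} := by
  refine Nat.card_congr ⟨fun φ => ⟨(φ (.a 1), φ (.xa 0)), ?_, ?_⟩,
    fun p => MonoidHom.mk' (quatFun p.1.1 p.1.2) (quatFun_mul p.2.1 p.2.2), ?_, ?_⟩
  · show (φ (.a 1))⁻¹ * φ (.xa 0) * φ (.a 1) * φ (.xa 0) = 1
    rw [← map_inv, ← map_mul, ← map_mul, ← map_mul]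
    rw [show ((QuaternionGroup.a 1)⁻¹ * .xa 0 * .a 1 * .xa 0 : QuaternionGroup 2) = 1
      from by decide, map_one]
  · show φ (.a 1) * (φ (.xa 0))⁻¹ * φ (.a 1) * φ (.xa 0) = 1
    rw [← map_inv, ← map_mul, ← map_mul, ← map_mul]
    rw [show ((QuaternionGroup.a 1) * (.xa 0)⁻¹ * .a 1 * .xa 0 : QuaternionGroup 2) = 1
      from by decide, map_one]
  · intro φ
    ext x
    rcases x with i | i
    · show (φ (.a 1)) ^ i.val = φ (.a i)
      rw [← map_pow, show ((QuaternionGroup.a 1) ^ i.val : QuaternionGroup 2) = .a i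
        from by revert i; decide]
    · show φ (.xa 0) * (φ (.a 1)) ^ i.val = φ (.xa i)
      rw [← map_pow, ← map_mul, show ((QuaternionGroup.xa 0) * (.a 1) ^ i.val
        : QuaternionGroup 2) = .xa i from by revert i; decide]
  · intro p
    ext
    · show p.1.1 ^ (1 : ZMod (2 * 2)).val = p.1.1
      rw [show (1 : ZMod (2 * 2)).val = 1 from rfl, pow_one]
    · show p.1.2 * p.1.1 ^ (0 : ZMod (2 * 2)).val = p.1.2
      rw [show (0 : ZMod (2 * 2)).val = 0 from rfl, pow_zero, mul_one]
end

section
/- Let k be a field and let n, m be positive integers with d = gcd(n, m) and l = lcm(n, m) = n·m/d. In the category Rep k (Multiplicative ℤ), the tensor product M(n) ⊗ M(m) is isomorphic to the direct sum of d copies of M(l). -/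
open CategoryTheory CategoryTheory.Limits MonoidalCategory

/-- `M k n` is the representation of `Multiplicative ℤ` on the free `k`-module with basis
`ZMod n`, where the integer `a` acts by the translation `i ↦ i + a` of `ZMod n` (so the
generator acts on basis vectors by the cyclic shift `i ↦ i + 1`, i.e. on functions by
`f ↦ (i ↦ f (i - 1))`).  This is the `Rep`-theoretic incarnation of the
`k[X, X⁻¹]`-module `k[X, X⁻¹]/(Xⁿ − 1)`. -/
noncomputable def M (k : Type) [Field k] (n : ℕ) : Rep k (Multiplicative ℤ) :=
  Rep.of
    ((LinearEquiv.automorphismGroup.toLinearMapMonoidHom).comp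
      (zpowersHom ((ZMod n → k) ≃ₗ[k] (ZMod n → k))
        (LinearEquiv.funCongrLeft k k (Equiv.subRight (1 : ZMod n)))))

noncomputable instance (k : Type) [Field k] :
    HasFiniteBiproducts (Rep k (Multiplicative ℤ)) :=
  HasFiniteBiproducts.of_hasFiniteProducts

namespace MAux

variable (k : Type) [Field k]

/-- The permutation representation of `Multiplicative ℤ` on `X → k` induced by an
equivalence `e : X ≃ X` (the generator sends `f` to `f ∘ e`). -/
noncomputable def permRep (X : Type) (e : X ≃ X) : Rep k (Multiplicative ℤ) :=
  Rep.of
    ((LinearEquiv.automorphismGroup.toLinearMapMonoidHom).comp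
      (zpowersHom ((X → k) ≃ₗ[k] (X → k)) (LinearEquiv.funCongrLeft k k e)))

lemma M_eq (n : ℕ) : M k n = permRep k (ZMod n) (Equiv.subRight (1 : ZMod n)) := rfl

variable {k}

lemma lmul_apply {V : Type} [AddCommGroup V] [Module k V] (A B : V ≃ₗ[k] V) (x : V) :
    (A * B) x = A (B x) := rfl

lemma intertwine_pow {V W : Type} [AddCommGroup V] [AddCommGroup W] [Module k V] [Module k W]
    (f : V →ₗ[k] W) (A : V ≃ₗ[k] V) (B : W ≃ₗ[k] W)
    (h : ∀ x, f (A x) = B (f x)) : ∀ (n : ℕ) (x : V), f ((A ^ n) x) = (B ^ n) (f x) := by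
  intro n
  induction n with
  | zero => intro x; simp only [pow_zero]; rfl
  | succ n ih =>
      intro x
      rw [pow_succ, pow_succ, lmul_apply, lmul_apply, ih (A x), h x]

lemma intertwine_zpow {V W : Type} [AddCommGroup V] [AddCommGroup W] [Module k V] [Module k W]
    (f : V →ₗ[k] W) (A : V ≃ₗ[k] V) (B : W ≃ₗ[k] W)
    (h : ∀ x, f (A x) = B (f x)) : ∀ (a : ℤ) (x : V), f ((A ^ a) x) = (B ^ a) (f x) := by
  have h' : ∀ x, f (A.symm x) = B.symm (f x) := by
    intro x
    have h2 := h (A.symm x)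
    rw [A.apply_symm_apply] at h2
    rw [h2, B.symm_apply_apply]
  intro a x
  cases a with
  | ofNat n => simpa using intertwine_pow f A B h n x
  | negSucc n =>
      rw [zpow_negSucc, zpow_negSucc, ← inv_pow, ← inv_pow]
      exact intertwine_pow f A.symm B.symm h' (n + 1) x

/-- An equivariant bijection of the underlying sets induces an isomorphism of
permutation representations. -/
noncomputable def permRepIso {X Y : Type} (e : X ≃ X) (f : Y ≃ Y) (φ : X ≃ Y)
    (hφ : ∀ x, φ (e x) = f (φ x)) : permRep k X e ≅ permRep k Y f := by
  refine Rep.mkIso (Representation.Equiv.mk (LinearEquiv.funCongrLeft k k φ.symm) ?_)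
  intro g
  have hgen : ∀ v, (LinearEquiv.funCongrLeft k k φ.symm)
        ((LinearEquiv.funCongrLeft k k e) v)
      = (LinearEquiv.funCongrLeft k k f) ((LinearEquiv.funCongrLeft k k φ.symm) v) := by
    intro v
    funext y
    have key : e (φ.symm y) = φ.symm (f y) := by
      apply φ.injective
      rw [hφ, Equiv.apply_symm_apply, Equiv.apply_symm_apply]
    simp only [LinearEquiv.funCongrLeft_apply, LinearMap.funLeft_apply]
    rw [key]
  refine LinearMap.ext fun v => ?_
  exact intertwine_zpow (LinearEquiv.funCongrLeft k k φ.symm).toLinearMap _ _ hgen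
    (Multiplicative.toAdd g) v

variable (k)

noncomputable def funTensor (X Y : Type) [Fintype X] [Fintype Y] :
    TensorProduct k (X → k) (Y → k) ≃ₗ[k] (X × Y → k) :=
  (TensorProduct.congr (Finsupp.linearEquivFunOnFinite k k X).symm
      (Finsupp.linearEquivFunOnFinite k k Y).symm).trans
    ((finsuppTensorFinsupp' k X Y).trans (Finsupp.linearEquivFunOnFinite k k (X × Y)))

lemma funTensor_tmul {X Y : Type} [Fintype X] [Fintype Y] (x : X → k) (y : Y → k) (p : X × Y) :
    funTensor k X Y (x ⊗ₜ y) p = x p.1 * y p.2 := by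
  obtain ⟨a, b⟩ := p
  simp [funTensor, finsuppTensorFinsupp'_apply_apply]

noncomputable def tensorIso (n m : ℕ) [NeZero n] [NeZero m] :
    (M k n ⊗ M k m) ≅ permRep k (ZMod n × ZMod m)
      ((Equiv.subRight (1 : ZMod n)).prodCongr (Equiv.subRight (1 : ZMod m))) := by
  refine Rep.mkIso (Representation.Equiv.mk (funTensor k (ZMod n) (ZMod m)) ?_)
  intro g
  have hgen : ∀ v, (funTensor k (ZMod n) (ZMod m))
        ((TensorProduct.congr (LinearEquiv.funCongrLeft k k (Equiv.subRight (1 : ZMod n)))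
          (LinearEquiv.funCongrLeft k k (Equiv.subRight (1 : ZMod m)))) v)
      = (LinearEquiv.funCongrLeft k k
          ((Equiv.subRight (1 : ZMod n)).prodCongr (Equiv.subRight (1 : ZMod m))))
        ((funTensor k (ZMod n) (ZMod m)) v) := by
    have hext : ((funTensor k (ZMod n) (ZMod m)).toLinearMap.comp
          (TensorProduct.congr (LinearEquiv.funCongrLeft k k (Equiv.subRight (1 : ZMod n)))
            (LinearEquiv.funCongrLeft k k (Equiv.subRight (1 : ZMod m)))).toLinearMap)
        = (LinearEquiv.funCongrLeft k k
            ((Equiv.subRight (1 : ZMod n)).prodCongr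
              (Equiv.subRight (1 : ZMod m)))).toLinearMap.comp
          (funTensor k (ZMod n) (ZMod m)).toLinearMap := by
      apply TensorProduct.ext'
      intro x y
      funext p
      simp [funTensor_tmul]
    intro v
    exact LinearMap.congr_fun hext v
  have hmap : TensorProduct.map
        ((LinearEquiv.funCongrLeft k k (Equiv.subRight (1 : ZMod n))
            ^ (Multiplicative.toAdd (α := ℤ) g) :
          (ZMod n → k) ≃ₗ[k] (ZMod n → k)) : (ZMod n → k) →ₗ[k] (ZMod n → k))
        ((LinearEquiv.funCongrLeft k k (Equiv.subRight (1 : ZMod m))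
            ^ (Multiplicative.toAdd (α := ℤ) g) :
          (ZMod m → k) ≃ₗ[k] (ZMod m → k)) : (ZMod m → k) →ₗ[k] (ZMod m → k))
      = ((TensorProduct.congr (LinearEquiv.funCongrLeft k k (Equiv.subRight (1 : ZMod n)))
          (LinearEquiv.funCongrLeft k k (Equiv.subRight (1 : ZMod m)))
            ^ (Multiplicative.toAdd (α := ℤ) g)).toLinearMap) := by
    rw [TensorProduct.congr_zpow]
    rfl
  refine LinearMap.ext fun v => ?_
  show (funTensor k (ZMod n) (ZMod m))
      ((TensorProduct.map
        ((LinearEquiv.funCongrLeft k k (Equiv.subRight (1 : ZMod n))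
            ^ (Multiplicative.toAdd (α := ℤ) g) :
          (ZMod n → k) ≃ₗ[k] (ZMod n → k)) : (ZMod n → k) →ₗ[k] (ZMod n → k))
        ((LinearEquiv.funCongrLeft k k (Equiv.subRight (1 : ZMod m))
            ^ (Multiplicative.toAdd (α := ℤ) g) :
          (ZMod m → k) ≃ₗ[k] (ZMod m → k)) : (ZMod m → k) →ₗ[k] (ZMod m → k))) v)
    = (LinearEquiv.funCongrLeft k k
          ((Equiv.subRight (1 : ZMod n)).prodCongr (Equiv.subRight (1 : ZMod m)))
        ^ (Multiplicative.toAdd (α := ℤ) g))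
      ((funTensor k (ZMod n) (ZMod m)) v)
  rw [hmap]
  exact intertwine_zpow (funTensor k (ZMod n) (ZMod m)).toLinearMap _ _ hgen
    (Multiplicative.toAdd (α := ℤ) g) v

section Biproduct

variable (d l : ℕ)

/-- Projection onto the `i`-th block. -/
noncomputable def proj (i : Fin d) :
    permRep k (Fin d × ZMod l) ((Equiv.refl (Fin d)).prodCongr (Equiv.subRight (1 : ZMod l)))
      ⟶ M k l := Rep.ofHom
  ⟨LinearMap.funLeft k k (fun t => (i, t)), by
    intro g
    refine LinearMap.ext fun v => ?_
    refine intertwine_zpow (LinearMap.funLeft k k (fun t : ZMod l => (i, t)))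
      (LinearEquiv.funCongrLeft k k
        ((Equiv.refl (Fin d)).prodCongr (Equiv.subRight (1 : ZMod l))))
      (LinearEquiv.funCongrLeft k k (Equiv.subRight (1 : ZMod l))) ?_
      (Multiplicative.toAdd (α := ℤ) g) v
    intro x
    funext t
    rfl⟩

/-- The linear map extending a function on `ZMod l` by zero on the other blocks. -/
noncomputable def inclLM (i : Fin d) : (ZMod l → k) →ₗ[k] (Fin d × ZMod l → k) where
  toFun f := fun p => if p.1 = i then f p.2 else 0
  map_add' f g := by funext p; by_cases h : p.1 = i <;> simp [h]
  map_smul' c f := by funext p; by_cases h : p.1 = i <;> simp [h]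

@[simp] lemma inclLM_apply (i : Fin d) (f : ZMod l → k) (p : Fin d × ZMod l) :
    inclLM k d l i f p = if p.1 = i then f p.2 else 0 := rfl

/-- Inclusion of the `i`-th block. -/
noncomputable def incl (i : Fin d) :
    M k l ⟶
      permRep k (Fin d × ZMod l)
        ((Equiv.refl (Fin d)).prodCongr (Equiv.subRight (1 : ZMod l))) := Rep.ofHom
  ⟨inclLM k d l i, by
    intro g
    refine LinearMap.ext fun v => ?_
    refine intertwine_zpow (inclLM k d l i)
      (LinearEquiv.funCongrLeft k k (Equiv.subRight (1 : ZMod l)))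
      (LinearEquiv.funCongrLeft k k
        ((Equiv.refl (Fin d)).prodCongr (Equiv.subRight (1 : ZMod l)))) ?_
      (Multiplicative.toAdd (α := ℤ) g) v
    intro x
    funext p
    rfl⟩

lemma incl_proj (i : Fin d) : incl k d l i ≫ proj k d l i = 𝟙 (M k l) := by
  ext v
  show LinearMap.funLeft k k (fun t : ZMod l => (i, t)) (inclLM k d l i v) = v
  funext t
  simp [LinearMap.funLeft_apply]
  exact if_pos rfl

lemma incl_proj_ne (i j : Fin d) (h : j ≠ i) : incl k d l j ≫ proj k d l i = 0 := by
  ext v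
  show LinearMap.funLeft k k (fun t : ZMod l => (i, t)) (inclLM k d l j v) = 0
  funext t
  simp [LinearMap.funLeft_apply, h.symm]
  exact if_neg h.symm

lemma sum_proj_incl :
    (∑ i : Fin d, proj k d l i ≫ incl k d l i)
      = 𝟙 (permRep k (Fin d × ZMod l)
          ((Equiv.refl (Fin d)).prodCongr (Equiv.subRight (1 : ZMod l)))) := by
  ext v
  show (∑ i : Fin d, proj k d l i ≫ incl k d l i).hom v = v
  rw [Rep.sum_hom]
  funext p
  rw [Representation.IntertwiningMap.sum_apply]
  refine (Finset.sum_apply p _ _).trans ?_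
  have h2 : ∑ i : Fin d, ((proj k d l i ≫ incl k d l i).hom v) p
      = ∑ i : Fin d, (if p.1 = i then v (i, p.2) else 0) :=
    Finset.sum_congr rfl (fun i _ => rfl)
  rw [h2, Finset.sum_ite_eq]
  simp

/-- The permutation representation on `Fin d × ZMod l` (trivial in the first factor,
shift in the second) is the biproduct of `d` copies of `M k l`. -/
noncomputable def biprodIso :
    permRep k (Fin d × ZMod l) ((Equiv.refl (Fin d)).prodCongr (Equiv.subRight (1 : ZMod l)))
      ≅ ⨁ (fun _ : Fin d => M k l) where
  hom := biproduct.lift (proj k d l)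
  inv := biproduct.desc (incl k d l)
  hom_inv_id := by rw [biproduct.lift_desc, sum_proj_incl]
  inv_hom_id := by
    apply biproduct.hom_ext
    intro i
    apply biproduct.hom_ext'
    intro j
    simp only [Category.assoc, biproduct.lift_π, biproduct.ι_desc_assoc, Category.id_comp,
      biproduct.ι_π]
    by_cases h : j = i
    · subst h
      simp [incl_proj]
    · simp [h, incl_proj_ne k d l i j h]

end Biproduct

lemma exists_equiv (n m : ℕ) (hn : 0 < n) (hm : 0 < m) :
    ∃ φ : (Fin (Nat.gcd n m) × ZMod (Nat.lcm n m)) ≃ (ZMod n × ZMod m),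
      ∀ p, φ (((Equiv.refl (Fin (Nat.gcd n m))).prodCongr
            (Equiv.subRight (1 : ZMod (Nat.lcm n m)))) p)
        = ((Equiv.subRight (1 : ZMod n)).prodCongr (Equiv.subRight (1 : ZMod m))) (φ p) := by
  haveI : NeZero n := ⟨hn.ne'⟩
  haveI : NeZero m := ⟨hm.ne'⟩
  haveI : NeZero (Nat.lcm n m) := ⟨Nat.lcm_ne_zero hn.ne' hm.ne'⟩
  set d := Nat.gcd n m with hd
  set l := Nat.lcm n m with hl
  have hdn : d ∣ n := Nat.gcd_dvd_left n m
  have hdm : d ∣ m := Nat.gcd_dvd_right n m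
  have hnl : n ∣ l := Nat.dvd_lcm_left n m
  have hml : m ∣ l := Nat.dvd_lcm_right n m
  set f : Fin d × ZMod l → ZMod n × ZMod m :=
    fun p => (((p.1 : ℕ) : ZMod n) + ZMod.castHom hnl (ZMod n) p.2,
              ZMod.castHom hml (ZMod m) p.2) with hf
  have hinj : Function.Injective f := by
    rintro ⟨c, t⟩ ⟨c', t'⟩ h
    rw [Prod.ext_iff] at h
    obtain ⟨h1, h2⟩ := h
    simp only [hf] at h1 h2
    have ht : ((t.val : ℕ) : ZMod l) = t := ZMod.natCast_zmod_val t
    have ht' : ((t'.val : ℕ) : ZMod l) = t' := ZMod.natCast_zmod_val t'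
    rw [← ht, ← ht', map_natCast, map_natCast] at h2
    rw [← ht, ← ht', map_natCast, map_natCast] at h1
    have h1' : (((c : ℕ) + t.val : ℕ) : ZMod n) = (((c' : ℕ) + t'.val : ℕ) : ZMod n) := by
      push_cast
      exact h1
    have hmod1 : ((c : ℕ) + t.val) ≡ ((c' : ℕ) + t'.val) [MOD n] :=
      (ZMod.natCast_eq_natCast_iff _ _ _).mp h1'
    have hmod2 : t.val ≡ t'.val [MOD m] := (ZMod.natCast_eq_natCast_iff _ _ _).mp h2
    have hmod1d : ((c : ℕ) + t.val) ≡ ((c' : ℕ) + t'.val) [MOD d] := hmod1.of_dvd hdn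
    have hmod2d : t.val ≡ t'.val [MOD d] := hmod2.of_dvd hdm
    have hcd : (c : ℕ) ≡ (c' : ℕ) [MOD d] := Nat.ModEq.add_right_cancel hmod2d hmod1d
    have hc : c = c' := by
      apply Fin.ext
      have h3 := hcd
      unfold Nat.ModEq at h3
      rwa [Nat.mod_eq_of_lt c.isLt, Nat.mod_eq_of_lt c'.isLt] at h3
    subst hc
    have hmodn : t.val ≡ t'.val [MOD n] := Nat.ModEq.add_left_cancel' (c : ℕ) hmod1
    have hdvd_n : (n : ℤ) ∣ ((t'.val : ℤ) - (t.val : ℤ)) := Nat.modEq_iff_dvd.mp hmodn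
    have hdvd_m : (m : ℤ) ∣ ((t'.val : ℤ) - (t.val : ℤ)) := Nat.modEq_iff_dvd.mp hmod2
    have hdvd_l : (l : ℤ) ∣ ((t'.val : ℤ) - (t.val : ℤ)) := by
      have h4 := Int.ofNat_dvd_left.mpr (Int.lcm_dvd (Int.dvd_natAbs.mpr hdvd_n) (Int.dvd_natAbs.mpr hdvd_m))
      have h5 : Int.lcm (n : ℤ) (m : ℤ) = l := by
        simp [Int.lcm, hl]
      rwa [h5] at h4
    have h6 : t.val ≡ t'.val [MOD l] := Nat.modEq_iff_dvd.mpr hdvd_l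
    have h7 : ((t.val : ℕ) : ZMod l) = ((t'.val : ℕ) : ZMod l) :=
      (ZMod.natCast_eq_natCast_iff _ _ _).mpr h6
    rw [ht, ht'] at h7
    exact Prod.ext rfl h7
  have hcard : Fintype.card (Fin d × ZMod l) = Fintype.card (ZMod n × ZMod m) := by
    simp only [Fintype.card_prod, Fintype.card_fin, ZMod.card]
    rw [hd, hl, Nat.gcd_mul_lcm]
  have hbij : Function.Bijective f :=
    (Fintype.bijective_iff_injective_and_card f).mpr ⟨hinj, hcard⟩
  refine ⟨Equiv.ofBijective f hbij, ?_⟩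
  rintro ⟨c, t⟩
  simp only [Equiv.ofBijective_apply, Equiv.prodCongr_apply, Prod.map, Equiv.refl_apply,
    Equiv.subRight_apply, hf, map_sub, map_one]
  refine Prod.ext ?_ rfl
  show ((c : ℕ) : ZMod n) + (ZMod.castHom hnl (ZMod n) t - 1)
      = ((c : ℕ) : ZMod n) + ZMod.castHom hnl (ZMod n) t - 1
  ring

end MAux

/-- In `Rep k (Multiplicative ℤ)`, the tensor product `M(n) ⊗ M(m)` is isomorphic to the
direct sum of `gcd n m` copies of `M(lcm n m)`. -/
theorem M_tensor_M_iso_biproduct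
    (k : Type) [Field k] (n m : ℕ) (hn : 0 < n) (hm : 0 < m) :
    Nonempty ((M k n ⊗ M k m) ≅ ⨁ fun _ : Fin (Nat.gcd n m) => M k (Nat.lcm n m)) := by
  haveI : NeZero n := ⟨hn.ne'⟩
  haveI : NeZero m := ⟨hm.ne'⟩
  haveI : NeZero (Nat.lcm n m) := ⟨Nat.lcm_ne_zero hn.ne' hm.ne'⟩
  obtain ⟨φ, hφ⟩ := MAux.exists_equiv n m hn hm
  refine ⟨MAux.tensorIso k n m ≪≫ (MAux.permRepIso _ _ φ hφ).symm ≪≫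
    MAux.biprodIso k (Nat.gcd n m) (Nat.lcm n m)⟩
end

section
/- Let k be a field and let n, m be positive integers. The k-vector space of morphisms from M(n) to M(m) in Rep k (Multiplicative ℤ) (equivalently, the space of k-linear maps f : (ZMod n → k) → (ZMod m → k) intertwining the cyclic shift operators) has dimension gcd(n, m): finrank k (M(n) ⟶ M(m)) = Nat.gcd n m. -/
open CategoryTheory

namespace MAux
variable {k : Type} [Field k] {n m : ℕ} [NeZero n] [NeZero m]

lemma shift_pow (a : ℤ) (v : ZMod n → k) (i : ZMod n) :
    ((LinearEquiv.funCongrLeft k k (Equiv.subRight (1 : ZMod n)) ^ a) v) i = v (i - a) := by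
  induction a using Int.induction_on generalizing v i with
  | zero => simp
  | succ a ih =>
      rw [zpow_add, zpow_one]
      have h : ∀ (e f : (ZMod n → k) ≃ₗ[k] (ZMod n → k)) (w : ZMod n → k), (e * f) w = e (f w) :=
        fun _ _ _ => rfl
      rw [h, ih]
      simp [LinearEquiv.funCongrLeft, sub_sub]
  | pred a ih =>
      rw [sub_eq_add_neg, zpow_add, zpow_neg_one]
      have h : ∀ (e f : (ZMod n → k) ≃ₗ[k] (ZMod n → k)) (w : ZMod n → k), (e * f) w = e (f w) :=
        fun _ _ _ => rfl
      rw [h, ih]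
      have h2 : ((LinearEquiv.funCongrLeft k k (Equiv.subRight (1 : ZMod n)))⁻¹ v) (i - (-a : ℤ)) =
          v (i - (-a : ℤ) + 1) := rfl
      rw [h2]; congr 1; push_cast; ring

lemma M_ρ_apply (a : ℤ) (v : ZMod n → k) (i : ZMod n) :
    ((M k n).ρ (Multiplicative.ofAdd a)) v i = v (i - a) :=
  shift_pow a v i

/-- cast maps -/
noncomputable def cm (n m : ℕ) : ZMod m →+* ZMod (Nat.gcd n m) :=
  ZMod.castHom (Nat.gcd_dvd_right n m) _
noncomputable def cn (n m : ℕ) : ZMod n →+* ZMod (Nat.gcd n m) :=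
  ZMod.castHom (Nat.gcd_dvd_left n m) _

noncomputable def Lmap (C : ZMod (Nat.gcd n m) → k) : (ZMod n → k) →ₗ[k] (ZMod m → k) where
  toFun v := fun j => ∑ i, v i * C (cm n m j - cn n m i)
  map_add' v w := by funext j; simp [add_mul, Finset.sum_add_distrib]
  map_smul' c v := by funext j; simp [Finset.mul_sum, mul_assoc]

lemma Lmap_comm (C : ZMod (Nat.gcd n m) → k) (a : ℤ) (v : ZMod n → k) (j : ZMod m) :
    Lmap C ((M k n).ρ (Multiplicative.ofAdd a) v) j
      = (M k m).ρ (Multiplicative.ofAdd a) (Lmap C v) j := by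
  rw [M_ρ_apply]
  show ∑ i, ((M k n).ρ (Multiplicative.ofAdd a) v) i * C (cm n m j - cn n m i)
      = ∑ i, v i * C (cm n m (j - a) - cn n m i)
  refine Fintype.sum_equiv (Equiv.subRight ((a : ZMod n))) _ _ fun i => ?_
  rw [M_ρ_apply]
  simp only [Equiv.subRight_apply, map_sub, map_intCast]
  congr 2
  push_cast
  ring

noncomputable def toHom (C : ZMod (Nat.gcd n m) → k) : M k n ⟶ M k m :=
  Rep.ofHom ⟨Lmap C, by
    intro a
    apply LinearMap.ext
    intro v
    funext j
    have := Lmap_comm C (Multiplicative.toAdd a) v j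
    exact this⟩


set_option linter.unusedSectionVars false

lemma hom_single_shift (f : M k n ⟶ M k m) (a : ℤ) (i₀ : ZMod n) (j : ZMod m) :
    f.hom (Pi.single (i₀ + (a : ZMod n)) 1) j = f.hom (Pi.single i₀ 1) (j - (a : ZMod m)) := by
  have h := Rep.hom_comm_apply f (Multiplicative.ofAdd a) (Pi.single i₀ (1 : k))
  have h1 : (M k n).ρ (Multiplicative.ofAdd a) (Pi.single i₀ (1 : k))
      = Pi.single (i₀ + (a : ZMod n)) 1 := by
    funext i
    rw [M_ρ_apply]
    simp [Pi.single_apply, sub_eq_iff_eq_add, add_comm]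
  rw [← h1, h]
  exact M_ρ_apply a _ j

lemma hom_single_val (f : M k n ⟶ M k m) (i : ZMod n) (j : ZMod m) :
    f.hom (Pi.single i 1) j = f.hom (Pi.single 0 1) (j - (i.val : ZMod m)) := by
  have h := hom_single_shift f (i.val : ℤ) 0 j
  have h1 : ((0 : ZMod n) + ((i.val : ℤ) : ZMod n)) = i := by
    push_cast
    simp [ZMod.natCast_val, ZMod.cast_id]
  have h2 : (((i.val : ℤ)) : ZMod m) = ((i.val : ℕ) : ZMod m) := by push_cast; ring
  rw [h1, h2] at h
  exact h

lemma hom_single_congr (f : M k n ⟶ M k m) (j j' : ZMod m) (h : cm n m j = cm n m j') :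
    f.hom (Pi.single 0 1) j = f.hom (Pi.single 0 1) j' := by
  haveI : NeZero (Nat.gcd n m) := ⟨Nat.gcd_ne_zero_left (NeZero.ne n)⟩
  -- the difference is divisible by gcd
  have hx : cm n m (j - j') = 0 := by rw [map_sub, h, sub_self]
  have hval : ((j - j').val : ZMod (Nat.gcd n m)) = 0 := by
    rw [cm, ZMod.castHom_apply] at hx
    rw [ZMod.natCast_val]
    exact hx
  obtain ⟨s, hs⟩ := (ZMod.natCast_eq_zero_iff _ _).mp hval
  -- Bezout
  set t : ℤ := Nat.gcdA n m * s with ht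
  have key : j - j' = ((n : ℤ) * t : ℤ) := by
    have hb : (Nat.gcd n m : ℤ) = n * Nat.gcdA n m + m * Nat.gcdB n m := Nat.gcd_eq_gcd_ab n m
    have : (j - j') = (((j - j').val : ℕ) : ZMod m) := by
      simp [ZMod.natCast_val, ZMod.cast_id]
    rw [this, hs]
    have h3 : ((Nat.gcd n m * s : ℕ) : ZMod m) = (((Nat.gcd n m : ℤ) * s : ℤ) : ZMod m) := by
      push_cast; ring
    rw [h3, hb]
    push_cast
    simp [ZMod.natCast_self]
    rw [Int.cast_mul]
    push_cast
    ring
  have h0 : ((0 : ZMod n) + (((n : ℤ) * t : ℤ) : ZMod n)) = 0 := by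
    push_cast
    simp
  have hshift := hom_single_shift f ((n : ℤ) * t) 0 j
  rw [h0] at hshift
  rw [hshift]
  congr 1
  rw [← key]
  ring

lemma cm_natCast_val (x : ZMod (Nat.gcd n m)) : cm n m ((x.val : ZMod m)) = x := by
  haveI : NeZero (Nat.gcd n m) := ⟨Nat.gcd_ne_zero_left (NeZero.ne n)⟩
  rw [map_natCast]
  simp [ZMod.natCast_val, ZMod.cast_id]

lemma cm_val_eq_cn (i : ZMod n) : cm n m ((i.val : ZMod m)) = cn n m i := by
  haveI : NeZero (Nat.gcd n m) := ⟨Nat.gcd_ne_zero_left (NeZero.ne n)⟩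
  rw [map_natCast, cn, ZMod.castHom_apply, ZMod.natCast_val]

lemma hom_eq (f : M k n ⟶ M k m) (v : ZMod n → k) (j : ZMod m) :
    f.hom v j = Lmap (fun c => f.hom (Pi.single 0 1) ((c.val : ZMod m))) v j := by
  haveI : NeZero (Nat.gcd n m) := ⟨Nat.gcd_ne_zero_left (NeZero.ne n)⟩
  have hv : v = ∑ i, v i • (Pi.single i 1 : ZMod n → k) := by
    funext x
    simp [Pi.single_apply]
  conv_lhs => rw [hv]
  erw [map_sum]
  show (∑ i, f.hom (v i • (Pi.single i 1 : ZMod n → k))) j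
      = ∑ i, v i * f.hom (Pi.single 0 1) (((cm n m j - cn n m i).val : ZMod m))
  erw [Finset.sum_apply]
  refine Finset.sum_congr rfl fun i _ => ?_
  erw [map_smul]
  show v i * f.hom (Pi.single i 1) j = _
  rw [hom_single_val]
  congr 1
  apply hom_single_congr
  rw [map_sub, cm_val_eq_cn, cm_natCast_val]

noncomputable def homEquiv : (M k n ⟶ M k m) ≃ₗ[k] (ZMod (Nat.gcd n m) → k) where
  toFun f := fun c => f.hom (Pi.single 0 1) ((c.val : ZMod m))
  map_add' f f' := by
    funext c
    show (f + f').hom (Pi.single 0 1) ((c.val : ZMod m)) = _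
    rw [Rep.add_hom]
    rfl
  map_smul' a f := by
    funext c
    show (a • f).hom (Pi.single 0 1) ((c.val : ZMod m)) = _
    rw [Rep.smul_hom]
    rfl
  invFun C := toHom C
  left_inv f := by
    apply Rep.hom_ext
    apply Representation.IntertwiningMap.ext
    apply LinearMap.ext
    intro v
    funext j
    exact (hom_eq f v j).symm
  right_inv C := by
    haveI : NeZero (Nat.gcd n m) := ⟨Nat.gcd_ne_zero_left (NeZero.ne n)⟩
    funext c
    show Lmap C (Pi.single 0 1) ((c.val : ZMod m)) = C c
    show (∑ i, (Pi.single 0 1 : ZMod n → k) i * C (cm n m ((c.val : ZMod m)) - cn n m i)) = C c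
    rw [Finset.sum_eq_single (0 : ZMod n)]
    · simp [cm_natCast_val, cn]
    · intro b _ hb
      simp [Pi.single_apply, hb]
    · simp

end MAux

/-- The space of morphisms `M(n) ⟶ M(m)` in `Rep k (Multiplicative ℤ)` has `k`-dimension
`gcd n m`. -/
theorem finrank_hom_M_M (k : Type) [Field k] (n m : ℕ) (hn : 0 < n) (hm : 0 < m) :
    Module.finrank k (M k n ⟶ M k m) = Nat.gcd n m := by
  haveI : NeZero n := ⟨hn.ne'⟩
  haveI : NeZero m := ⟨hm.ne'⟩
  haveI : NeZero (Nat.gcd n m) := ⟨Nat.gcd_ne_zero_left hn.ne'⟩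
  rw [(MAux.homEquiv (k := k) (n := n) (m := m)).finrank_eq]
  rw [Module.finrank_pi, ZMod.card]
end

section
/- Let k be a field, n a natural number, and σ, τ : Equiv.Perm (Fin n) permutations. The permutation matrices P_σ and P_τ over k are similar (there exists an invertible n×n matrix M over k with M * P_σ * M⁻¹ = P_τ) if and only if σ and τ are conjugate in the symmetric group (IsConj σ τ). -/
set_option linter.unusedSectionVars false

open Equiv Equiv.Perm Function

section Orbits
variable {α : Type*} [Fintype α] [DecidableEq α]

def cycleSetoid (π : Perm α) : Setoid α :=
  ⟨π.SameCycle, ⟨SameCycle.refl π, fun h => h.symm, fun h h' => h.trans h'⟩⟩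

instance (π : Perm α) : DecidableRel (cycleSetoid π).r :=
  fun x y => inferInstanceAs (Decidable (π.SameCycle x y))

instance (π : Perm α) : DecidableEq (Quotient (cycleSetoid π)) :=
  @Quotient.decidableEq _ _ (fun x y => inferInstanceAs (Decidable (π.SameCycle x y)))

abbrev Orb (π : Perm α) := Quotient (cycleSetoid π)

noncomputable instance (π : Perm α) : Fintype (Orb π) := Fintype.ofFinite _

lemma mem_periodicPts_perm (π : Perm α) (x : α) : x ∈ periodicPts π := by
  refine ⟨orderOf π, orderOf_pos π, ?_⟩
  show (⇑π)^[orderOf π] x = x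
  rw [Equiv.Perm.iterate_eq_pow, pow_orderOf_eq_one]; rfl

lemma minimalPeriod_perm_pos (π : Perm α) (x : α) : 0 < minimalPeriod π x :=
  minimalPeriod_pos_of_mem_periodicPts (mem_periodicPts_perm π x)

lemma orbMk_eq_iff (π : Perm α) {x y : α} :
    (Quotient.mk (cycleSetoid π) x = Quotient.mk (cycleSetoid π) y) ↔ π.SameCycle x y :=
  Quotient.eq''

/-- The class of `x` has `minimalPeriod π x` elements. -/
lemma card_class (π : Perm α) (x : α) :
    (Finset.univ.filter (fun y => Quotient.mk (cycleSetoid π) y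
        = Quotient.mk (cycleSetoid π) x)).card = minimalPeriod π x := by
  classical
  rw [← Fintype.card_subtype]
  have e1 : {y // Quotient.mk (cycleSetoid π) y = Quotient.mk (cycleSetoid π) x}
      ≃ {y // π.SameCycle x y} :=
    Equiv.subtypeEquivRight (fun y => by rw [orbMk_eq_iff]; exact ⟨fun h => h.symm, fun h => h.symm⟩)
  have e2 : Fin (minimalPeriod π x) ≃ {y // π.SameCycle x y} := by
    refine Equiv.ofBijective (fun j => ⟨(π ^ (j : ℕ)) x, ⟨(j : ℕ), by simp [zpow_natCast]⟩⟩) ⟨?_, ?_⟩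
    · intro i j hij
      have hiter : (⇑π)^[(i : ℕ)] x = (⇑π)^[(j : ℕ)] x := by
        simpa [Equiv.Perm.iterate_eq_pow] using congrArg Subtype.val hij
      exact Fin.ext (iterate_injOn_Iio_minimalPeriod (f := ⇑π) (x := x)
        (Set.mem_Iio.2 i.isLt) (Set.mem_Iio.2 j.isLt) hiter)
    · rintro ⟨y, hy⟩
      obtain ⟨i, -, -, hi⟩ := hy.exists_pow_eq π
      refine ⟨⟨i % minimalPeriod π x, Nat.mod_lt _ (minimalPeriod_perm_pos π x)⟩, ?_⟩
      ext
      show (π ^ (i % minimalPeriod π x)) x = y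
      rw [← hi, ← Equiv.Perm.iterate_eq_pow, ← Equiv.Perm.iterate_eq_pow]
      exact iterate_mod_minimalPeriod_eq
  rw [Fintype.card_congr (e1.trans e2.symm), Fintype.card_fin]

lemma sameCycle_minimalPeriod {π : Perm α} {x y : α} (h : π.SameCycle x y) :
    minimalPeriod π y = minimalPeriod π x := by
  classical
  rw [← card_class, ← card_class]
  have : Quotient.mk (cycleSetoid π) y = Quotient.mk (cycleSetoid π) x :=
    (orbMk_eq_iff π).2 h.symm
  simp [this]

lemma card_class' (π : Perm α) (Q : Quotient (cycleSetoid π)) :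
    (Finset.univ.filter (fun y => Quotient.mk (cycleSetoid π) y = Q)).card
      = minimalPeriod π Q.out := by
  classical
  induction Q using Quotient.ind with
  | _ x =>
    rw [card_class]
    refine sameCycle_minimalPeriod ?_
    rw [← orbMk_eq_iff (π := π), Quotient.out_eq]

lemma minimalPeriod_perm_pow (π : Perm α) (x : α) (m : ℕ) :
    minimalPeriod (π ^ m) x = minimalPeriod π x / Nat.gcd (minimalPeriod π x) m := by
  have : ⇑(π ^ m) = (⇑π)^[m] := (Equiv.Perm.iterate_eq_pow π m).symm
  rw [this, minimalPeriod_iterate_eq_div_gcd' (mem_periodicPts_perm π x)]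

/-- Projection from orbits of `π ^ m` to orbits of `π`. -/
def orbProj (π : Perm α) (m : ℕ) : Orb (π ^ m) → Orb π :=
  Quotient.map' id (fun x y h => by
    obtain ⟨t, ht⟩ := h
    exact ⟨(m : ℤ) * t, by rw [zpow_mul, zpow_natCast]; exact ht⟩)

lemma orbProj_mk (π : Perm α) (m : ℕ) (x : α) :
    orbProj π m (Quotient.mk (cycleSetoid (π ^ m)) x) = Quotient.mk (cycleSetoid π) x := rfl

lemma card_fiber (π : Perm α) (m : ℕ) (hm : m ≠ 0) (Q : Orb π) :
    (Finset.univ.filter (fun Q' : Orb (π ^ m) => orbProj π m Q' = Q)).card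
      = Nat.gcd (minimalPeriod π Q.out) m := by
  classical
  have hDpos : 0 < minimalPeriod π Q.out := minimalPeriod_perm_pos π Q.out
  have hgdvd : Nat.gcd (minimalPeriod π Q.out) m ∣ minimalPeriod π Q.out :=
    Nat.gcd_dvd_left _ _
  have hgpos : 0 < Nat.gcd (minimalPeriod π Q.out) m := Nat.gcd_pos_of_pos_left m hDpos
  have hqpos : 0 < minimalPeriod π Q.out / Nat.gcd (minimalPeriod π Q.out) m :=
    Nat.div_pos (Nat.le_of_dvd hDpos hgdvd) hgpos
  have hsplit : (Finset.univ.filter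
        (fun x : α => Quotient.mk (cycleSetoid π) x = Q)).card
      = ∑ Q' ∈ Finset.univ.filter (fun Q' : Orb (π ^ m) => orbProj π m Q' = Q),
          ((Finset.univ.filter (fun x : α => Quotient.mk (cycleSetoid π) x = Q)).filter
            (fun x => Quotient.mk (cycleSetoid (π ^ m)) x = Q')).card := by
    refine Finset.card_eq_sum_card_fiberwise (fun x hx => ?_)
    rw [Finset.mem_coe, Finset.mem_filter]
    refine ⟨Finset.mem_univ _, ?_⟩
    rw [orbProj_mk]
    exact (Finset.mem_filter.1 (Finset.mem_coe.1 hx)).2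
  have hfib : ∀ Q' ∈ Finset.univ.filter (fun Q' : Orb (π ^ m) => orbProj π m Q' = Q),
      ((Finset.univ.filter (fun x : α => Quotient.mk (cycleSetoid π) x = Q)).filter
        (fun x => Quotient.mk (cycleSetoid (π ^ m)) x = Q')).card
      = minimalPeriod π Q.out / Nat.gcd (minimalPeriod π Q.out) m := by
    intro Q' hQ'
    have hQ'Q : orbProj π m Q' = Q := (Finset.mem_filter.1 hQ').2
    have hout : Quotient.mk (cycleSetoid π) Q'.out = Q := by
      rw [← orbProj_mk π m, Quotient.out_eq, hQ'Q]
    have hper : minimalPeriod π Q'.out = minimalPeriod π Q.out := by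
      refine sameCycle_minimalPeriod ?_
      rw [← orbMk_eq_iff (π := π), Quotient.out_eq Q, hout]
    have hsf : (Finset.univ.filter (fun x : α => Quotient.mk (cycleSetoid π) x = Q)).filter
          (fun x => Quotient.mk (cycleSetoid (π ^ m)) x = Q')
        = Finset.univ.filter (fun x => Quotient.mk (cycleSetoid (π ^ m)) x = Q') := by
      ext x
      simp only [Finset.mem_filter, Finset.mem_univ, true_and]
      refine ⟨fun h => h.2, fun h => ⟨?_, h⟩⟩
      rw [← hQ'Q, ← h, orbProj_mk]
    rw [hsf, card_class', minimalPeriod_perm_pow]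
    rw [sameCycle_minimalPeriod (x := Q.out) ?_]
    · rw [← orbMk_eq_iff (π := π), Quotient.out_eq Q, hout]
  have key := hsplit
  rw [Finset.sum_congr rfl hfib, Finset.sum_const, smul_eq_mul, card_class'] at key
  exact Nat.eq_of_mul_eq_mul_right hqpos
    (key.symm.trans (Nat.mul_div_cancel' hgdvd).symm)

lemma card_orb_pow (π : Perm α) (m : ℕ) (hm : m ≠ 0) :
    Fintype.card (Orb (π ^ m)) = ∑ Q : Orb π, Nat.gcd (minimalPeriod π Q.out) m := by
  classical
  rw [← Finset.card_univ]
  rw [Finset.card_eq_sum_card_fiberwise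
    (f := orbProj π m) (t := Finset.univ) (fun x _ => Finset.mem_univ _)]
  refine Finset.sum_congr rfl (fun Q _ => ?_)
  exact card_fiber π m hm Q

end Orbits

section LinAlg

variable {k : Type} [Field k] {α : Type*} [Fintype α] [DecidableEq α]

lemma permMatrix_mulVec (π : Perm α) (v : α → k) :
    (π.permMatrix k).mulVec v = fun i => v (π i) := by
  ext i
  simp [Matrix.mulVec, dotProduct, PEquiv.toMatrix_apply,
    Equiv.toPEquiv_apply, Option.mem_def, ite_mul]

lemma mem_fixedKer_iff (π : Perm α) (v : α → k) :
    v ∈ LinearMap.ker (Matrix.mulVecLin (π.permMatrix k - 1)) ↔ ∀ i, v (π i) = v i := by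
  rw [LinearMap.mem_ker, Matrix.mulVecLin_apply, Matrix.sub_mulVec, Matrix.one_mulVec,
    sub_eq_zero, permMatrix_mulVec]
  constructor
  · intro h i; exact congrFun h i
  · intro h; funext i; exact h i

lemma const_of_fixed {π : Perm α} {v : α → k} (hv : ∀ i, v (π i) = v i) :
    ∀ (t : ℤ) (x : α), v ((π ^ t) x) = v x := by
  have hinv : ∀ i, v (π⁻¹ i) = v i := fun i => by
    have := hv (π⁻¹ i)
    rw [← Equiv.Perm.mul_apply, mul_inv_cancel, Equiv.Perm.one_apply] at this
    exact this.symm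
  intro t
  induction t using Int.induction_on with
  | zero => simp
  | succ t ih =>
    intro x
    have h1 : (π ^ ((t : ℤ) + 1)) x = π ((π ^ (t : ℤ)) x) := by
      rw [add_comm, zpow_add, zpow_one]; rfl
    rw [h1, hv, ih]
  | pred t ih =>
    intro x
    have h1 : (π ^ (-(t : ℤ) - 1)) x = π⁻¹ ((π ^ (-(t : ℤ))) x) := by
      rw [sub_eq_add_neg, add_comm, zpow_add, zpow_neg_one]; rfl
    rw [h1, hinv, ih]

theorem finrank_fixed (π : Perm α) :
    Module.finrank k (LinearMap.ker (Matrix.mulVecLin (π.permMatrix k - 1)))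
      = Fintype.card (Orb π) := by
  classical
  have E : LinearMap.ker (Matrix.mulVecLin (π.permMatrix k - 1)) ≃ₗ[k] (Orb π → k) :=
    { toFun := fun v Q => v.1 Q.out
      map_add' := fun v w => rfl
      map_smul' := fun c v => rfl
      invFun := fun w => ⟨fun i => w (Quotient.mk (cycleSetoid π) i), by
        rw [mem_fixedKer_iff]
        intro i
        have : Quotient.mk (cycleSetoid π) (π i) = Quotient.mk (cycleSetoid π) i :=
          (orbMk_eq_iff π).2 ⟨-1, by simp⟩
        rw [this]⟩
      left_inv := by
        rintro ⟨v, hv⟩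
        ext i
        have hv' := (mem_fixedKer_iff π v).1 hv
        have h : π.SameCycle (Quotient.mk (cycleSetoid π) i).out i :=
          (orbMk_eq_iff π).1 (Quotient.out_eq _)
        obtain ⟨t, ht⟩ := h
        show v (Quotient.mk (cycleSetoid π) i).out = v i
        have hc := const_of_fixed hv' t ((Quotient.mk (cycleSetoid π) i).out)
        rw [ht] at hc
        exact hc.symm
      right_inv := by
        intro w
        funext Q
        show w (Quotient.mk (cycleSetoid π) Q.out) = w Q
        rw [Quotient.out_eq] }
  rw [LinearEquiv.finrank_eq E, Module.finrank_pi]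

lemma permMatrix_one : ((1 : Perm α).permMatrix k) = 1 := by
  show ((1 : Perm α).toPEquiv).toMatrix = 1
  rw [show (1 : Perm α) = Equiv.refl α from rfl, Equiv.toPEquiv_refl, PEquiv.toMatrix_refl]

lemma permMatrix_mul (σ τ : Perm α) :
    ((σ * τ).permMatrix k) = (τ.permMatrix k) * (σ.permMatrix k) := by
  show ((σ * τ).toPEquiv).toMatrix = _
  rw [show (σ * τ : Perm α) = (τ.trans σ) from rfl, Equiv.toPEquiv_trans, PEquiv.toMatrix_trans]

lemma permMatrix_pow (σ : Perm α) (m : ℕ) :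
    ((σ ^ m).permMatrix k) = (σ.permMatrix k) ^ m := by
  induction m with
  | zero => rw [pow_zero, pow_zero, permMatrix_one]
  | succ m ih =>
    rw [pow_succ σ m, permMatrix_mul, ih, ← pow_succ']

lemma permMatrix_isUnit (σ : Perm α) : IsUnit (σ.permMatrix k) := by
  refine ⟨⟨σ.permMatrix k, (σ⁻¹).permMatrix k, ?_, ?_⟩, rfl⟩
  · rw [← permMatrix_mul, inv_mul_cancel, permMatrix_one]
  · rw [← permMatrix_mul, mul_inv_cancel, permMatrix_one]

end LinAlg

section Transfer

variable {k : Type} [Field k] {α : Type*} [Fintype α] [DecidableEq α]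

lemma rank_nullity_matrix (C : Matrix α α k) :
    C.rank + Module.finrank k (LinearMap.ker C.mulVecLin) = Fintype.card α := by
  rw [Matrix.rank, LinearMap.finrank_range_add_finrank_ker, Module.finrank_pi]

lemma card_orb_eq_of_similar {σ τ : Perm α} (M : Matrix α α k) (hM : IsUnit M)
    (h : M * σ.permMatrix k * M⁻¹ = τ.permMatrix k) (m : ℕ) :
    Fintype.card (Orb (σ ^ m)) = Fintype.card (Orb (τ ^ m)) := by
  classical
  have hdet : IsUnit M.det := (Matrix.isUnit_iff_isUnit_det M).1 hM
  have hMM : M * M⁻¹ = 1 := Matrix.mul_nonsing_inv M hdet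
  have hMM' : M⁻¹ * M = 1 := Matrix.nonsing_inv_mul M hdet
  have hdetinv : IsUnit (M⁻¹).det := by
    have h1 : M⁻¹.det * M.det = 1 := Matrix.det_nonsing_inv_mul_det M hdet
    exact IsUnit.of_mul_eq_one _ h1
  have hpow : ∀ j : ℕ, M * (σ.permMatrix k) ^ j * M⁻¹ = (τ.permMatrix k) ^ j := by
    intro j
    induction j with
    | zero => rw [pow_zero, pow_zero, mul_one, hMM]
    | succ j ih =>
      rw [pow_succ, pow_succ, ← ih, ← h]
      have h2 : M⁻¹ * (M * (σ.permMatrix k * M⁻¹)) = σ.permMatrix k * M⁻¹ := by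
        rw [← Matrix.mul_assoc, hMM', one_mul]
      simp only [Matrix.mul_assoc, h2]
  have hsub : M * ((σ.permMatrix k) ^ m - 1) * M⁻¹ = (τ.permMatrix k) ^ m - 1 := by
    rw [Matrix.mul_sub, mul_one, Matrix.sub_mul, hpow, hMM]
  have hrank : ((σ.permMatrix k) ^ m - 1).rank = ((τ.permMatrix k) ^ m - 1).rank := by
    rw [← hsub, Matrix.rank_mul_eq_left_of_isUnit_det _ _ hdetinv,
      Matrix.rank_mul_eq_right_of_isUnit_det _ _ hdet]
  have h1 := rank_nullity_matrix (k := k) ((σ.permMatrix k) ^ m - 1)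
  have h2 := rank_nullity_matrix (k := k) ((τ.permMatrix k) ^ m - 1)
  rw [hrank] at h1
  have hker : Module.finrank k (LinearMap.ker ((σ.permMatrix k ^ m - 1).mulVecLin))
      = Module.finrank k (LinearMap.ker ((τ.permMatrix k ^ m - 1).mulVecLin)) := by
    omega
  rw [← finrank_fixed (k := k) (σ ^ m), ← finrank_fixed (k := k) (τ ^ m),
    permMatrix_pow, permMatrix_pow]
  exact hker

end Transfer

section NT

/-- number of elements of `A` divisible by `e` -/
def cnt (e : ℕ) (A : Multiset ℕ) : ℕ := (A.filter (e ∣ ·)).card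

lemma cnt_cons (e d : ℕ) (A : Multiset ℕ) :
    cnt e (d ::ₘ A) = (if e ∣ d then 1 else 0) + cnt e A := by
  unfold cnt
  rw [Multiset.filter_cons, Multiset.card_add]
  by_cases h : e ∣ d <;> simp [h]

lemma cnt_one (A : Multiset ℕ) : cnt 1 A = A.card := by
  unfold cnt
  rw [Multiset.filter_eq_self.2 (fun a _ => one_dvd a)]

lemma gcd_eq_sum_totient (d m : ℕ) (hm : m ≠ 0) :
    Nat.gcd d m = ∑ e ∈ m.divisors, (if e ∣ d then Nat.totient e else 0) := by
  rw [← Finset.sum_filter]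
  have hfe : m.divisors.filter (· ∣ d) = (Nat.gcd d m).divisors := by
    ext e
    simp only [Finset.mem_filter, Nat.mem_divisors, Nat.dvd_gcd_iff]
    constructor
    · rintro ⟨⟨hem, _⟩, hed⟩
      exact ⟨⟨hed, hem⟩, Nat.ne_of_gt (Nat.gcd_pos_of_pos_right d (Nat.pos_of_ne_zero hm))⟩
    · rintro ⟨⟨hed, hem⟩, -⟩
      exact ⟨⟨hem, hm⟩, hed⟩
  rw [hfe, Nat.sum_totient]

lemma multiset_sum_map_sum (A : Multiset ℕ) (s : Finset ℕ) (f : ℕ → ℕ → ℕ) :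
    (A.map (fun d => ∑ e ∈ s, f d e)).sum = ∑ e ∈ s, (A.map (fun d => f d e)).sum := by
  induction A using Multiset.induction with
  | empty => simp
  | cons d A ih => simp [ih, Finset.sum_add_distrib]

lemma multiset_map_ite_sum (A : Multiset ℕ) (e c : ℕ) :
    (A.map (fun d => if e ∣ d then c else 0)).sum = c * cnt e A := by
  induction A using Multiset.induction with
  | empty => simp [cnt]
  | cons d A ih =>
    rw [Multiset.map_cons, Multiset.sum_cons, ih, cnt_cons, Nat.mul_add]
    by_cases h : e ∣ d <;> simp [h]

lemma sum_gcd_eq (A : Multiset ℕ) (m : ℕ) (hm : m ≠ 0) :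
    (A.map (fun d => Nat.gcd d m)).sum
      = ∑ e ∈ m.divisors, Nat.totient e * cnt e A := by
  rw [Multiset.map_congr rfl (fun d _ => gcd_eq_sum_totient d m hm), multiset_sum_map_sum]
  exact Finset.sum_congr rfl (fun e _ => multiset_map_ite_sum A e (Nat.totient e))

lemma cnt_eq_of_gcd_sum_eq {A B : Multiset ℕ}
    (h : ∀ m : ℕ, m ≠ 0 →
      (A.map (fun d => Nat.gcd d m)).sum = (B.map (fun d => Nat.gcd d m)).sum) :
    ∀ e : ℕ, e ≠ 0 → cnt e A = cnt e B := by
  intro e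
  induction e using Nat.strong_induction_on with
  | _ e ih =>
    intro he
    have h1 := h e he
    rw [sum_gcd_eq _ e he, sum_gcd_eq _ e he] at h1
    have hsplit : ∀ (C : Multiset ℕ), ∑ x ∈ e.divisors, Nat.totient x * cnt x C
        = (∑ x ∈ e.divisors.erase e, Nat.totient x * cnt x C) + Nat.totient e * cnt e C := by
      intro C
      rw [Finset.sum_erase_add _ _ (Nat.mem_divisors_self e he)]
    rw [hsplit A, hsplit B] at h1
    have heq : ∑ x ∈ e.divisors.erase e, Nat.totient x * cnt x A
        = ∑ x ∈ e.divisors.erase e, Nat.totient x * cnt x B := by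
      refine Finset.sum_congr rfl (fun x hx => ?_)
      have hxd : x ∈ e.divisors := Finset.mem_of_mem_erase hx
      have hxne : x ≠ e := Finset.ne_of_mem_erase hx
      have hx0 : 0 < x := Nat.pos_of_mem_divisors hxd
      have hxlt : x < e := lt_of_le_of_ne
        (Nat.le_of_dvd (Nat.pos_of_ne_zero he) (Nat.mem_divisors.1 hxd).1) hxne
      rw [ih x hxlt (Nat.pos_iff_ne_zero.1 hx0)]
    rw [heq] at h1
    have h2 := Nat.add_left_cancel h1
    exact Nat.eq_of_mul_eq_mul_left (Nat.totient_pos.2 (Nat.pos_of_ne_zero he)) h2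

lemma multiset_eq_of_cnt_eq : ∀ (N : ℕ) (A B : Multiset ℕ), A.card ≤ N → 0 ∉ A → 0 ∉ B →
    (∀ e : ℕ, e ≠ 0 → cnt e A = cnt e B) → A = B := by
  have base : ∀ (A B : Multiset ℕ), A = 0 →
      (∀ e : ℕ, e ≠ 0 → cnt e A = cnt e B) → A = B := by
    intro A B hA h
    subst hA
    have hcB := h 1 one_ne_zero
    rw [cnt_one, cnt_one] at hcB
    have : B.card = 0 := by simpa using hcB.symm
    rw [Multiset.card_eq_zero] at this
    exact this.symm
  intro N
  induction N with
  | zero =>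
    intro A B hcard h0A h0B h
    exact base A B (Multiset.card_eq_zero.1 (Nat.le_zero.1 hcard)) h
  | succ N ih =>
    intro A B hcard h0A h0B h
    by_cases hA : A = 0
    · exact base A B hA h
    · have hne : (A + B).toFinset.Nonempty := by
        rw [Multiset.toFinset_nonempty]
        intro hAB
        exact hA (Multiset.le_zero.1 (hAB ▸ Multiset.le_add_right A B))
      obtain ⟨D, hDmem, hmax⟩ : ∃ D, D ∈ A + B ∧ ∀ x ∈ A + B, x ≤ D :=
        ⟨(A + B).toFinset.max' hne,
          Multiset.mem_toFinset.1 ((A + B).toFinset.max'_mem hne),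
          fun x hx => (A + B).toFinset.le_max' x (Multiset.mem_toFinset.2 hx)⟩
      have hD0 : D ≠ 0 := by
        rcases Multiset.mem_add.1 hDmem with hD | hD
        · exact fun h' => h0A (h' ▸ hD)
        · exact fun h' => h0B (h' ▸ hD)
      have hmem : ∀ C : Multiset ℕ, 0 ∉ C → (∀ x ∈ C, x ≤ D) → 0 < cnt D C → D ∈ C := by
        intro C h0C hle hpos
        rw [cnt, Multiset.card_pos_iff_exists_mem] at hpos
        obtain ⟨x, hx⟩ := hpos
        rw [Multiset.mem_filter] at hx
        have hx0 : 0 < x := Nat.pos_of_ne_zero (fun h' => h0C (h' ▸ hx.1))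
        have : D ≤ x := Nat.le_of_dvd hx0 hx.2
        have : x = D := le_antisymm (hle x hx.1) this
        exact this ▸ hx.1
      have hcntD : 0 < cnt D A ∧ 0 < cnt D B := by
        have hsame := h D hD0
        rcases Multiset.mem_add.1 hDmem with hD | hD
        · have : 0 < cnt D A := by
            rw [cnt, Multiset.card_pos_iff_exists_mem]
            exact ⟨D, Multiset.mem_filter.2 ⟨hD, dvd_refl D⟩⟩
          exact ⟨this, hsame ▸ this⟩
        · have : 0 < cnt D B := by
            rw [cnt, Multiset.card_pos_iff_exists_mem]
            exact ⟨D, Multiset.mem_filter.2 ⟨hD, dvd_refl D⟩⟩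
          exact ⟨hsame.symm ▸ this, this⟩
      have hDA : D ∈ A := hmem A h0A
        (fun x hx => hmax x (Multiset.mem_add.2 (Or.inl hx))) hcntD.1
      have hDB : D ∈ B := hmem B h0B
        (fun x hx => hmax x (Multiset.mem_add.2 (Or.inr hx))) hcntD.2
      obtain ⟨A', rfl⟩ := Multiset.exists_cons_of_mem hDA
      obtain ⟨B', rfl⟩ := Multiset.exists_cons_of_mem hDB
      have h' : ∀ e : ℕ, e ≠ 0 → cnt e A' = cnt e B' := by
        intro e he
        have := h e he
        rw [cnt_cons, cnt_cons] at this
        exact Nat.add_left_cancel this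
      have h0A' : 0 ∉ A' := fun hc => h0A (Multiset.mem_cons_of_mem hc)
      have h0B' : 0 ∉ B' := fun hc => h0B (Multiset.mem_cons_of_mem hc)
      have hcard' : A'.card ≤ N := by
        have := hcard
        rw [Multiset.card_cons] at this
        omega
      rw [ih A' B' hcard' h0A' h0B' h']
end NT

section CycleTypeLink

variable {α : Type*} [Fintype α] [DecidableEq α]

lemma card_sameCycle_filter (π : Perm α) (x : α) :
    (Finset.univ.filter (fun y => π.SameCycle x y)).card = minimalPeriod π x := by
  rw [← card_class π x]
  congr 1
  ext y
  simp only [Finset.mem_filter, Finset.mem_univ, true_and]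
  rw [orbMk_eq_iff]
  exact Equiv.Perm.sameCycle_comm

lemma card_support_cycleOf_eq (π : Perm α) (x : α) (hx : π x ≠ x) :
    (π.cycleOf x).support.card = minimalPeriod π x := by
  rw [← card_sameCycle_filter π x]
  congr 1
  ext y
  simp only [Finset.mem_filter, Finset.mem_univ, true_and]
  rw [Equiv.Perm.mem_support_cycleOf_iff]
  constructor
  · rintro ⟨h1, -⟩
    exact h1
  · intro h1
    exact ⟨h1, Equiv.Perm.mem_support.2 hx⟩

lemma minimalPeriod_ne_one_iff (π : Perm α) (x : α) :
    minimalPeriod π x ≠ 1 ↔ π x ≠ x := by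
  rw [not_iff_not, minimalPeriod_eq_one_iff_isFixedPt]
  rfl

/-- The multiset of orbit sizes (including fixed points). -/
noncomputable def mps (π : Perm α) : Multiset ℕ :=
  (Finset.univ : Finset (Orb π)).val.map (fun Q => minimalPeriod π Q.out)

lemma cycleType_eq_mps_filter (π : Perm α) :
    π.cycleType = (mps π).filter (fun d => d ≠ 1) := by
  classical
  rw [mps, Multiset.filter_map]
  have hval : Multiset.filter ((fun d => d ≠ 1) ∘ fun Q : Orb π => minimalPeriod π Q.out)
        Finset.univ.val
      = (Finset.univ.filter (fun Q : Orb π => minimalPeriod π Q.out ≠ 1)).val := by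
    rw [Finset.filter_val]
    rfl
  rw [hval]
  set s := Finset.univ.filter (fun Q : Orb π => minimalPeriod π Q.out ≠ 1) with hs
  have hout_ne : ∀ Q ∈ s, π Q.out ≠ Q.out := by
    intro Q hQ
    exact (minimalPeriod_ne_one_iff π Q.out).1 (Finset.mem_filter.1 hQ).2
  have hinj : Set.InjOn (fun Q : Orb π => π.cycleOf Q.out) s := by
    intro Q hQ Q' hQ' hQQ''
    have hQQ' : π.cycleOf Q.out = π.cycleOf Q'.out := hQQ''
    have h1 : Q'.out ∈ (π.cycleOf Q'.out).support := by
      rw [Equiv.Perm.mem_support_cycleOf_iff]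
      exact ⟨Equiv.Perm.SameCycle.refl _ _, Equiv.Perm.mem_support.2 (hout_ne Q' hQ')⟩
    rw [← hQQ'] at h1
    rw [Equiv.Perm.mem_support_cycleOf_iff] at h1
    have : Quotient.mk (cycleSetoid π) Q.out = Quotient.mk (cycleSetoid π) Q'.out :=
      (orbMk_eq_iff π).2 h1.1
    rw [Quotient.out_eq, Quotient.out_eq] at this
    exact this
  have himg : s.image (fun Q : Orb π => π.cycleOf Q.out) = π.cycleFactorsFinset := by
    ext c
    simp only [Finset.mem_image]
    constructor
    · rintro ⟨Q, hQ, rfl⟩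
      rw [Equiv.Perm.cycleOf_mem_cycleFactorsFinset_iff, Equiv.Perm.mem_support]
      exact hout_ne Q hQ
    · intro hc
      have hcyc : c.IsCycle := (Equiv.Perm.mem_cycleFactorsFinset_iff.1 hc).1
      obtain ⟨a, ha⟩ := hcyc.nonempty_support
      have hca : c = π.cycleOf a := Equiv.Perm.cycle_is_cycleOf ha hc
      have hasupp : a ∈ π.support := Equiv.Perm.mem_cycleFactorsFinset_support_le hc ha
      have haa : π a ≠ a := Equiv.Perm.mem_support.1 hasupp
      refine ⟨Quotient.mk (cycleSetoid π) a, ?_, ?_⟩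
      · rw [hs, Finset.mem_filter]
        refine ⟨Finset.mem_univ _, ?_⟩
        have hsc : π.SameCycle (Quotient.mk (cycleSetoid π) a).out a :=
          (orbMk_eq_iff π).1 (Quotient.out_eq _)
        rw [minimalPeriod_ne_one_iff]
        intro hfix
        obtain ⟨t, ht⟩ := hsc
        rw [Equiv.Perm.zpow_apply_eq_self_of_apply_eq_self hfix] at ht
        refine haa ?_
        rw [← ht]
        exact hfix
      · have hsc : π.SameCycle (Quotient.mk (cycleSetoid π) a).out a :=
          (orbMk_eq_iff π).1 (Quotient.out_eq _)
        exact hsc.cycleOf_eq.trans hca.symm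
  rw [Equiv.Perm.cycleType_def, ← himg, Finset.image_val_of_injOn hinj, Multiset.map_map]
  refine Multiset.map_congr rfl ?_
  intro Q hQ
  exact card_support_cycleOf_eq π Q.out (hout_ne Q hQ)

end CycleTypeLink

/-- Two permutation matrices over a field `k` are similar if and only if the underlying
permutations are conjugate in the symmetric group. -/
theorem permMatrix_similar_iff_isConj
    (k : Type) [Field k] (n : ℕ) (σ τ : Equiv.Perm (Fin n)) :
    (∃ M : Matrix (Fin n) (Fin n) k, IsUnit M ∧ M * σ.permMatrix k * M⁻¹ = τ.permMatrix k) ↔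
      IsConj σ τ := by
  constructor
  · rintro ⟨M, hM, h⟩
    rw [Equiv.Perm.isConj_iff_cycleType_eq, cycleType_eq_mps_filter, cycleType_eq_mps_filter]
    suffices hmps : mps σ = mps τ by rw [hmps]
    have h0 : ∀ ρ : Perm (Fin n), (0 : ℕ) ∉ mps ρ := by
      intro ρ h0
      rw [mps] at h0
      obtain ⟨Q, -, hQ⟩ := Multiset.mem_map.1 h0
      exact (minimalPeriod_perm_pos ρ Q.out).ne' hQ
    refine multiset_eq_of_cnt_eq (mps σ).card _ _ le_rfl (h0 σ) (h0 τ) ?_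
    refine cnt_eq_of_gcd_sum_eq ?_ 
    intro m hm
    have key : ∀ ρ : Perm (Fin n),
        ((mps ρ).map (fun d => Nat.gcd d m)).sum = Fintype.card (Orb (ρ ^ m)) := by
      intro ρ
      rw [card_orb_pow ρ m hm, mps, Multiset.map_map]
      rfl
    rw [key σ, key τ, card_orb_eq_of_similar M hM h m]
  · intro h
    obtain ⟨c, hc⟩ := isConj_iff.1 h
    refine ⟨(c⁻¹).permMatrix k, permMatrix_isUnit c⁻¹, ?_⟩
    have hinv : ((c⁻¹).permMatrix k)⁻¹ = c.permMatrix k := by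
      refine Matrix.inv_eq_right_inv ?_
      rw [← permMatrix_mul, mul_inv_cancel, permMatrix_one]
    rw [hinv, ← hc, permMatrix_mul (c * σ) c⁻¹, permMatrix_mul c σ, Matrix.mul_assoc]
end

section
/- Let k be a field, n a natural number, and σ, τ : Equiv.Perm (Fin n) permutations. If the permutation matrices P_σ and P_τ over k are similar (there exists an invertible n×n matrix M over k with M * P_σ * M⁻¹ = P_τ), then σ and τ have the same number of fixed points: Nat.card {i : Fin n | σ i = i} = Nat.card {i : Fin n | τ i = i}. -/
open Matrix MulAction

section aux

variable {k : Type} [Field k] {n : ℕ}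

/-- The orbit setoid of a permutation. -/
def pSetoid (ρ : Equiv.Perm (Fin n)) : Setoid (Fin n) where
  r i j := ∃ m : ℕ, (ρ ^ m) i = j
  iseqv := by
    constructor
    · exact fun i => ⟨0, rfl⟩
    · rintro i j ⟨m, rfl⟩
      refine ⟨m * orderOf ρ - m, ?_⟩
      rw [← Equiv.Perm.mul_apply, ← pow_add,
        Nat.sub_add_cancel (Nat.le_mul_of_pos_right m (orderOf_pos ρ)),
        pow_mul', pow_orderOf_eq_one, one_pow, Equiv.Perm.one_apply]
    · rintro i j l ⟨m, rfl⟩ ⟨m', rfl⟩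
      exact ⟨m' + m, by rw [pow_add, Equiv.Perm.mul_apply]⟩

noncomputable def O (ρ : Equiv.Perm (Fin n)) : ℕ := Nat.card (Quotient (pSetoid ρ))

lemma permMatrix_mulVec_s12 (ρ : Equiv.Perm (Fin n)) (v : Fin n → k) (i : Fin n) :
    (ρ.permMatrix k *ᵥ v) i = v (ρ i) := by
  simp [Matrix.mulVec, dotProduct, Equiv.toPEquiv_apply]

lemma rank_add_O (ρ : Equiv.Perm (Fin n)) :
    (ρ.permMatrix k - 1).rank + O ρ = n := by
  classical
  set A : Matrix (Fin n) (Fin n) k := ρ.permMatrix k - 1 with hA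
  have hker : ∀ v : Fin n → k, v ∈ LinearMap.ker A.mulVecLin ↔ ∀ i, v (ρ i) = v i := by
    intro v
    rw [LinearMap.mem_ker, mulVecLin_apply]
    constructor
    · intro h i
      have := congrFun h i
      simpa [hA, sub_mulVec, _root_.permMatrix_mulVec_s12, one_mulVec, sub_eq_zero] using this
    · intro h
      funext i
      simp [hA, sub_mulVec, _root_.permMatrix_mulVec_s12, one_mulVec, sub_eq_zero, h i]
  -- constant along orbits
  have const_of_mem : ∀ v : Fin n → k, v ∈ LinearMap.ker A.mulVecLin →
      ∀ i j : Fin n, (pSetoid ρ).r i j → v i = v j := by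
    intro v hv i j hij
    obtain ⟨m, rfl⟩ := hij
    rw [hker] at hv
    induction m with
    | zero => rfl
    | succ m ih =>
      rw [pow_succ', Equiv.Perm.mul_apply, hv ((ρ ^ m) i)]
      exact ih
  haveI : Fintype (Quotient (pSetoid ρ)) := Fintype.ofFinite _
  let φ : (Quotient (pSetoid ρ) → k) →ₗ[k] LinearMap.ker A.mulVecLin :=
  { toFun := fun w => ⟨fun i => w (Quotient.mk (pSetoid ρ) i), by
      rw [hker]
      intro i
      have : Quotient.mk (pSetoid ρ) (ρ i) = Quotient.mk (pSetoid ρ) i := by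
        refine (Quotient.sound ?_).symm
        exact ⟨1, by rw [pow_one]⟩
      rw [this]⟩
    map_add' := fun w₁ w₂ => rfl
    map_smul' := fun c w => rfl }
  have hbij : Function.Bijective φ := by
    constructor
    · intro w₁ w₂ hw
      funext q
      induction q using Quotient.ind with
      | _ i => exact congrFun (congrArg Subtype.val hw) i
    · rintro ⟨v, hv⟩
      refine ⟨Quotient.lift v (fun i j hij => const_of_mem v hv i j hij), ?_⟩
      ext i
      rfl
  have e : (Quotient (pSetoid ρ) → k) ≃ₗ[k] LinearMap.ker A.mulVecLin :=
    LinearEquiv.ofBijective φ hbij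
  have hfr : Module.finrank k (LinearMap.ker A.mulVecLin) = O ρ := by
    rw [← e.finrank_eq, Module.finrank_fintype_fun_eq_card, O, Nat.card_eq_fintype_card]
  have hrn := LinearMap.finrank_range_add_finrank_ker A.mulVecLin
  rw [Module.finrank_fintype_fun_eq_card, Fintype.card_fin] at hrn
  rw [Matrix.rank, hfr] at *
  omega


lemma permMatrix_pow_s12 (σ : Equiv.Perm (Fin n)) (d : ℕ) :
    ((σ ^ d).permMatrix k) = (σ.permMatrix k) ^ d := by
  induction d with
  | zero => rw [pow_zero]; show (Equiv.refl (Fin n)).toPEquiv.toMatrix = 1; rw [Equiv.toPEquiv_refl, PEquiv.toMatrix_refl]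
  | succ d ih =>
    rw [pow_succ' σ d, pow_succ, ← ih]
    show ((σ ^ d).trans σ).toPEquiv.toMatrix = _
    rw [Equiv.toPEquiv_trans, PEquiv.toMatrix_trans]

lemma O_eq_of_similar (σ τ : Equiv.Perm (Fin n))
    (h : ∃ M : Matrix (Fin n) (Fin n) k, IsUnit M ∧
      M * σ.permMatrix k * M⁻¹ = τ.permMatrix k) (d : ℕ) :
    O (σ ^ d) = O (τ ^ d) := by
  obtain ⟨M, hM, hMs⟩ := h
  have hdet : IsUnit M.det := (Matrix.isUnit_iff_isUnit_det M).mp hM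
  have hMM : M * M⁻¹ = 1 := Matrix.mul_nonsing_inv M hdet
  have hM'M : M⁻¹ * M = 1 := Matrix.nonsing_inv_mul M hdet
  have hconj : ∀ e : ℕ, M * (σ.permMatrix k) ^ e * M⁻¹ = (τ.permMatrix k) ^ e := by
    intro e
    induction e with
    | zero => simpa using hMM
    | succ e ih =>
      calc M * (σ.permMatrix k) ^ (e + 1) * M⁻¹
          = (M * (σ.permMatrix k) ^ e * M⁻¹) * (M * σ.permMatrix k * M⁻¹) := by
            rw [pow_succ]
            simp only [Matrix.mul_assoc]
            rw [← Matrix.mul_assoc M⁻¹ M, hM'M, Matrix.one_mul]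
        _ = (τ.permMatrix k) ^ (e + 1) := by rw [ih, hMs, pow_succ]
  have hconj2 : M * ((σ.permMatrix k) ^ d - 1) * M⁻¹ = (τ.permMatrix k) ^ d - 1 := by
    rw [Matrix.mul_sub, Matrix.sub_mul, hconj, Matrix.mul_one, hMM]
  have hrank : ((σ ^ d).permMatrix k - 1).rank = ((τ ^ d).permMatrix k - 1).rank := by
    rw [permMatrix_pow_s12 (k := k), permMatrix_pow_s12 (k := k), ← hconj2,
      Matrix.rank_mul_eq_left_of_isUnit_det _ _ (Matrix.isUnit_nonsing_inv_det M hdet),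
      Matrix.rank_mul_eq_right_of_isUnit_det _ _ hdet]
  have h1 := rank_add_O (k := k) (σ ^ d)
  have h2 := rank_add_O (k := k) (τ ^ d)
  omega

lemma burnside (ρ : Equiv.Perm (Fin n)) (K : ℕ) [NeZero K] (h1 : ρ ^ K = 1) :
    ∑ x : ZMod K, Nat.card {i : Fin n | (ρ ^ x.val) i = i} = O ρ * K := by
  classical
  have hK : K ≠ 0 := NeZero.ne K
  have hord : orderOf ρ ∣ K := orderOf_dvd_of_pow_eq_one h1
  have hpow : ∀ a b : ℕ, a % K = b % K → ρ ^ a = ρ ^ b := by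
    intro a b hab
    rw [pow_eq_pow_iff_modEq]
    exact (Nat.ModEq.of_dvd hord hab)
  let φ : Multiplicative (ZMod K) →* Equiv.Perm (Fin n) :=
  { toFun := fun x => ρ ^ (Multiplicative.toAdd x).val
    map_one' := by
      show ρ ^ (0 : ZMod K).val = 1
      rw [ZMod.val_zero, pow_zero]
    map_mul' := by
      intro a b
      show ρ ^ (Multiplicative.toAdd a + Multiplicative.toAdd b).val = _
      rw [← pow_add]
      apply hpow
      rw [ZMod.val_add, Nat.mod_mod_of_dvd _ dvd_rfl] }
  letI act : MulAction (Multiplicative (ZMod K)) (Fin n) := MulAction.compHom _ φ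
  haveI : ∀ a : Multiplicative (ZMod K), Fintype (fixedBy (Fin n) a) :=
    fun a => Fintype.ofFinite _
  haveI : Fintype (orbitRel.Quotient (Multiplicative (ZMod K)) (Fin n)) := Fintype.ofFinite _
  have hb := MulAction.sum_card_fixedBy_eq_card_orbits_mul_card_group
    (Multiplicative (ZMod K)) (Fin n)
  -- identify the setoids
  have hsetoid : orbitRel (Multiplicative (ZMod K)) (Fin n) = pSetoid ρ := by
    ext i j
    show i ∈ orbit (Multiplicative (ZMod K)) j ↔ _
    constructor
    · rintro ⟨g, rfl⟩
      exact Setoid.symm' (pSetoid ρ) ⟨(Multiplicative.toAdd g).val, rfl⟩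
    · intro hij
      obtain ⟨m, hm⟩ := Setoid.symm' (pSetoid ρ) hij
      exact ⟨Multiplicative.ofAdd (m : ZMod K), by
        show ρ ^ ((m : ZMod K)).val • j = i
        rw [ZMod.val_natCast, hpow (m % K) m (Nat.mod_mod_of_dvd _ dvd_rfl)]
        exact hm⟩
  have hΩ : Fintype.card (orbitRel.Quotient (Multiplicative (ZMod K)) (Fin n)) = O ρ := by
    rw [← Nat.card_eq_fintype_card]
    unfold orbitRel.Quotient
    rw [hsetoid]
    rfl
  have hG : Fintype.card (Multiplicative (ZMod K)) = K := by
    rw [Fintype.card_multiplicative, ZMod.card]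
  have hls : ∑ x : ZMod K, Nat.card {i : Fin n | (ρ ^ x.val) i = i}
      = ∑ a : Multiplicative (ZMod K), Fintype.card (fixedBy (Fin n) a) := by
    apply Fintype.sum_equiv (Multiplicative.ofAdd (α := ZMod K))
    intro x
    rw [← Nat.card_eq_fintype_card]
    rfl
  rw [hls, hb, hΩ, hG]

lemma fix_pow_gcd (ρ : Equiv.Perm (Fin n)) (K a : ℕ) (h1 : ρ ^ K = 1) :
    {i : Fin n | (ρ ^ a) i = i} = {i : Fin n | (ρ ^ Nat.gcd a K) i = i} := by
  ext i
  simp only [Set.mem_setOf_eq]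
  have hst : ∀ m : ℕ, ((ρ ^ m) i = i) ↔ ρ ^ m ∈ MulAction.stabilizer (Equiv.Perm (Fin n)) i := by
    intro m
    rw [MulAction.mem_stabilizer_iff]
    rfl
  rw [hst, hst]
  constructor
  · intro ha
    have hK : ρ ^ K ∈ MulAction.stabilizer (Equiv.Perm (Fin n)) i := by
      rw [h1]; exact one_mem _
    have : ρ ^ ((Nat.gcd a K : ℤ)) ∈ MulAction.stabilizer (Equiv.Perm (Fin n)) i := by
      rw [Nat.gcd_eq_gcd_ab, _root_.zpow_add, _root_.zpow_mul, _root_.zpow_mul]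
      exact mul_mem (zpow_mem (by rw [zpow_natCast]; exact ha) _)
        (zpow_mem (by rw [zpow_natCast]; exact hK) _)
    rwa [zpow_natCast] at this
  · intro hg
    obtain ⟨c, hc⟩ := Nat.gcd_dvd_left a K
    rw [hc, pow_mul]
    exact pow_mem hg c

lemma key (σ τ : Equiv.Perm (Fin n))
    (h : ∃ M : Matrix (Fin n) (Fin n) k, IsUnit M ∧
      M * σ.permMatrix k * M⁻¹ = τ.permMatrix k) :
    ∀ K d : ℕ, d * K = Fintype.card (Equiv.Perm (Fin n)) →
      Nat.card {i : Fin n | (σ ^ d) i = i} = Nat.card {i : Fin n | (τ ^ d) i = i} := by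
  intro K
  induction K using Nat.strong_induction_on with
  | _ K IH =>
    intro d hdK
    set M := Fintype.card (Equiv.Perm (Fin n)) with hMdef
    have hM0 : M ≠ 0 := Fintype.card_ne_zero
    have hK0 : K ≠ 0 := by rintro rfl; simp at hdK; omega
    have hσM : σ ^ M = 1 := pow_card_eq_one
    have hτM : τ ^ M = 1 := pow_card_eq_one
    have hσdK : (σ ^ d) ^ K = 1 := by rw [← pow_mul, hdK, hσM]
    have hτdK : (τ ^ d) ^ K = 1 := by rw [← pow_mul, hdK, hτM]
    rcases eq_or_ne K 1 with rfl | hK1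
    · -- d = M
      have hd : d = M := by omega
      have h1 : σ ^ d = 1 := by rw [hd, hσM]
      have h2 : τ ^ d = 1 := by rw [hd, hτM]
      rw [h1, h2]
    · have hK2 : 2 ≤ K := by omega
      haveI : NeZero K := ⟨hK0⟩
      have B1 := burnside (σ ^ d) K hσdK
      have B2 := burnside (τ ^ d) K hτdK
      have hO := O_eq_of_similar (k := k) σ τ h d
      have hsum : ∑ x : ZMod K, Nat.card {i : Fin n | ((σ ^ d) ^ x.val) i = i}
          = ∑ x : ZMod K, Nat.card {i : Fin n | ((τ ^ d) ^ x.val) i = i} := by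
        rw [B1, B2, hO]
      -- rewrite terms via gcd
      have hgcdσ : ∀ x : ZMod K, Nat.card {i : Fin n | ((σ ^ d) ^ x.val) i = i}
          = Nat.card {i : Fin n | ((σ ^ d) ^ Nat.gcd x.val K) i = i} := fun x =>
        congrArg Nat.card (congrArg _ (fix_pow_gcd (σ ^ d) K x.val hσdK))
      have hgcdτ : ∀ x : ZMod K, Nat.card {i : Fin n | ((τ ^ d) ^ x.val) i = i}
          = Nat.card {i : Fin n | ((τ ^ d) ^ Nat.gcd x.val K) i = i} := fun x =>
        congrArg Nat.card (congrArg _ (fix_pow_gcd (τ ^ d) K x.val hτdK))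
      simp only [hgcdσ, hgcdτ] at hsum
      -- termwise equality on gcd ≠ 1
      have hne : ∀ x : ZMod K, Nat.gcd x.val K ≠ 1 →
          Nat.card {i : Fin n | ((σ ^ d) ^ Nat.gcd x.val K) i = i}
            = Nat.card {i : Fin n | ((τ ^ d) ^ Nat.gcd x.val K) i = i} := by
        intro x hg1
        set g := Nat.gcd x.val K with hg
        have hgdvd : g ∣ K := Nat.gcd_dvd_right _ _
        have hgpos : g ≠ 0 := by
          intro h0
          exact hK0 (Nat.eq_zero_of_gcd_eq_zero_right h0)
        have hg2 : 2 ≤ g := by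
          rcases Nat.lt_or_ge g 2 with h' | h'
          · interval_cases g <;> simp_all
          · exact h'
        have hKg : K / g < K := Nat.div_lt_self (by omega) (by omega)
        have hdg : (d * g) * (K / g) = M := by
          rw [mul_assoc, Nat.mul_div_cancel' hgdvd, hdK]
        have := IH (K / g) hKg (d * g) hdg
        rw [pow_mul σ d g, pow_mul τ d g] at this
        exact this
      -- split the sum
      classical
      have hsplit : ∀ (ρ : Equiv.Perm (Fin n)),
          ∑ x : ZMod K, Nat.card {i : Fin n | ((ρ ^ d) ^ Nat.gcd x.val K) i = i}
          = (Finset.univ.filter (fun x : ZMod K => Nat.gcd x.val K = 1)).card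
              * Nat.card {i : Fin n | (ρ ^ d) i = i}
            + ∑ x ∈ Finset.univ.filter (fun x : ZMod K => ¬ Nat.gcd x.val K = 1),
                Nat.card {i : Fin n | ((ρ ^ d) ^ Nat.gcd x.val K) i = i} := by
        intro ρ
        rw [← Finset.sum_filter_add_sum_filter_not Finset.univ
          (fun x : ZMod K => Nat.gcd x.val K = 1)]
        congr 1
        rw [Finset.sum_congr rfl (fun x hx => ?_), Finset.sum_const, smul_eq_mul]
        rw [Finset.mem_filter] at hx
        rw [hx.2, pow_one]
      rw [hsplit σ, hsplit τ] at hsum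
      rw [Finset.sum_congr rfl (fun x hx => hne x (by simpa using (Finset.mem_filter.mp hx).2))]
        at hsum
      have hcard : 0 < (Finset.univ.filter (fun x : ZMod K => Nat.gcd x.val K = 1)).card := by
        rw [Finset.card_pos]
        refine ⟨1, Finset.mem_filter.mpr ⟨Finset.mem_univ _, ?_⟩⟩
        haveI : Fact (1 < K) := ⟨by omega⟩
        rw [ZMod.val_one K]
        exact Nat.gcd_one_left K
      have := Nat.add_right_cancel hsum
      exact Nat.eq_of_mul_eq_mul_left hcard this

end aux

/-- If the permutation matrices of `σ` and `τ` over a field `k` are similar, then `σ` and `τ`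
have the same number of fixed points. -/
theorem fixedPoints_card_eq_of_permMatrix_similar
    (k : Type) [Field k] (n : ℕ) (σ τ : Equiv.Perm (Fin n))
    (h : ∃ M : Matrix (Fin n) (Fin n) k, IsUnit M ∧
      M * σ.permMatrix k * M⁻¹ = τ.permMatrix k) :
    Nat.card {i : Fin n | σ i = i} = Nat.card {i : Fin n | τ i = i} := by
  have := key (k := k) σ τ h (Fintype.card (Equiv.Perm (Fin n))) 1
    (one_mul _)
  rw [pow_one, pow_one] at this
  exact this
end

section
/- Let k be a field, V a finite-dimensional k-vector space, and P an invertible linear endomorphism of V. Then P is represented by a permutation matrix in some basis (i.e., there exists a basis b of V such that P permutes the set of basis vectors) if and only if the representation of Multiplicative ℤ on V in which the generator acts by P is isomorphic in Rep k (Multiplicative ℤ) to a finite direct sum ⊕ᵢ M(nᵢ) for some positive integers n₁, …, n_r. -/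
open CategoryTheory CategoryTheory.Limits

/-- The representation of `Multiplicative ℤ` on `V` in which the integer `a` acts by the
`a`-th power of the invertible linear endomorphism `P`. -/
noncomputable def repOf (k : Type) [Field k] (V : Type) [AddCommGroup V] [Module k V]
    (P : V ≃ₗ[k] V) : Rep k (Multiplicative ℤ) :=
  Rep.of
    ((LinearEquiv.automorphismGroup.toLinearMapMonoidHom).comp
      (zpowersHom (V ≃ₗ[k] V) P))

section Aux

variable (k : Type) [Field k]

/-- The permutation representation of `Multiplicative ℤ` attached to a permutation `σ`. -/
noncomputable def permRep (ι : Type) (σ : Equiv.Perm ι) : Rep k (Multiplicative ℤ) :=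
  Rep.of
    ((LinearEquiv.automorphismGroup.toLinearMapMonoidHom).comp
      (zpowersHom ((ι → k) ≃ₗ[k] (ι → k))
        (LinearEquiv.funCongrLeft k k σ.symm)))

theorem permRep_ρ_apply (ι : Type) (σ : Equiv.Perm ι) (f : ι → k) :
    (permRep k ι σ).ρ (Multiplicative.ofAdd 1) f = f ∘ σ.symm := by
  simp [permRep, zpowersHom_apply]; rfl

theorem M_ρ_apply (n : ℕ) (f : ZMod n → k) :
    (M k n).ρ (Multiplicative.ofAdd 1) f = f ∘ (Equiv.subRight (1 : ZMod n)) := by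
  simp [M, zpowersHom_apply]; rfl

theorem repOf_ρ_apply (V : Type) [AddCommGroup V] [Module k V] (P : V ≃ₗ[k] V) (v : V) :
    (repOf k V P).ρ (Multiplicative.ofAdd 1) v = P v := by
  simp [repOf, zpowersHom_apply]; rfl

theorem ρ_mul_apply (A : Rep k (Multiplicative ℤ)) (x y : Multiplicative ℤ) (v : A) :
    A.ρ (x * y) v = A.ρ x (A.ρ y v) := by
  rw [map_mul]; rfl

theorem key_s13 (A B : Rep k (Multiplicative ℤ)) (f : A →ₗ[k] B)
    (h : ∀ v, f (A.ρ (Multiplicative.ofAdd 1) v) = B.ρ (Multiplicative.ofAdd 1) (f v)) :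
    ∀ (a : ℤ) (v : A), f (A.ρ (Multiplicative.ofAdd a) v) = B.ρ (Multiplicative.ofAdd a) (f v) := by
  have hneg : ∀ v, f (A.ρ (Multiplicative.ofAdd (-1)) v)
      = B.ρ (Multiplicative.ofAdd (-1)) (f v) := by
    intro v
    have h1 : A.ρ (Multiplicative.ofAdd 1) (A.ρ (Multiplicative.ofAdd (-1)) v) = v := by
      rw [← ρ_mul_apply]; norm_num
    have h2 := h (A.ρ (Multiplicative.ofAdd (-1)) v)
    rw [h1] at h2
    rw [h2, ← ρ_mul_apply]; norm_num
  intro a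
  induction a using Int.induction_on with
  | zero => intro v; norm_num
  | succ n ih =>
      intro v
      have e : Multiplicative.ofAdd ((n : ℤ) + 1)
          = Multiplicative.ofAdd (n : ℤ) * Multiplicative.ofAdd 1 := rfl
      rw [e, ρ_mul_apply, ρ_mul_apply, ih, h]
  | pred n ih =>
      intro v
      have e : Multiplicative.ofAdd (-(n : ℤ) - 1)
          = Multiplicative.ofAdd (-(n : ℤ)) * Multiplicative.ofAdd (-1) := rfl
      rw [e, ρ_mul_apply, ρ_mul_apply, ih, hneg]

/-- Build a `Rep` morphism from a linear map commuting with the generator action. -/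
noncomputable def mkHom (A B : Rep k (Multiplicative ℤ)) (f : A →ₗ[k] B)
    (h : ∀ v, f (A.ρ (Multiplicative.ofAdd 1) v) = B.ρ (Multiplicative.ofAdd 1) (f v)) :
    A ⟶ B :=
  ConcreteCategory.ofHom (C := Rep k (Multiplicative ℤ))
    (f.intertwiningMap_of_isIntertwiningMap A.ρ B.ρ (fun g v => by
    show f ((A.ρ g) v) = (B.ρ g) (f v)
    exact key_s13 k A B f h g.toAdd v))

@[simp] theorem mkHom_hom (A B : Rep k (Multiplicative ℤ)) (f : A →ₗ[k] B) (h) :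
    (mkHom k A B f h).hom.toLinearMap = f := rfl

/-- Build a `Rep` isomorphism from a linear equivalence commuting with the generator action. -/
noncomputable def mkIso (A B : Rep k (Multiplicative ℤ)) (f : A ≃ₗ[k] B)
    (h : ∀ v, f (A.ρ (Multiplicative.ofAdd 1) v) = B.ρ (Multiplicative.ofAdd 1) (f v)) :
    A ≅ B where
  hom := mkHom k A B f.toLinearMap h
  inv := mkHom k B A f.symm.toLinearMap (fun w => by
    show f.symm (B.ρ (Multiplicative.ofAdd 1) w) = A.ρ (Multiplicative.ofAdd 1) (f.symm w)
    apply f.injective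
    rw [h, f.apply_symm_apply, f.apply_symm_apply])
  hom_inv_id := by
    apply Rep.hom_ext
    apply Representation.IntertwiningMap.ext
    apply LinearMap.ext
    intro v
    show f.symm (f v) = v
    simp
  inv_hom_id := by
    apply Rep.hom_ext
    apply Representation.IntertwiningMap.ext
    apply LinearMap.ext
    intro v
    show f (f.symm v) = v
    simp

/-- `M k n` is the permutation representation of the cyclic shift. -/
noncomputable def MIsoPermRep (n : ℕ) :
    M k n ≅ permRep k (ZMod n) (Equiv.addRight (1 : ZMod n)) := by
  refine mkIso k _ _ (LinearEquiv.refl k _) (fun f => ?_)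
  show (M k n).ρ (Multiplicative.ofAdd 1) f
    = (permRep k (ZMod n) (Equiv.addRight 1)).ρ (Multiplicative.ofAdd 1) f
  rw [M_ρ_apply k n f, permRep_ρ_apply k (ZMod n) _ f]
  funext x
  show f (x - 1) = f ((Equiv.addRight (1 : ZMod n)).symm x)
  congr 1
  simp [Equiv.subRight, sub_eq_add_neg]

/-- A basis permuted by `P` gives an isomorphism with a permutation representation. -/
noncomputable def isoOfBasis (V : Type) [AddCommGroup V] [Module k V]
    (P : V ≃ₗ[k] V) (ι : Type) [Fintype ι] (b : Module.Basis ι k V) (σ : Equiv.Perm ι)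
    (hb : ∀ i, P (b i) = b (σ i)) :
    repOf k V P ≅ permRep k ι σ := by
  refine mkIso k _ _ b.equivFun (fun v => ?_)
  erw [repOf_ρ_apply, permRep_ρ_apply]
  classical
  suffices hmap : (LinearMap.funLeft k k σ.symm) ∘ₗ (b.equivFun : V →ₗ[k] (ι → k))
      = (b.equivFun : V →ₗ[k] (ι → k)) ∘ₗ (P : V →ₗ[k] V) by
    exact (LinearMap.congr_fun hmap v).symm
  apply b.ext
  intro i
  simp only [LinearMap.comp_apply, LinearEquiv.coe_coe, LinearMap.funLeft_apply]
  rw [hb i]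
  funext j
  simp only [LinearMap.funLeft_apply, Module.Basis.equivFun_self]
  simp [Equiv.eq_symm_apply]

/-- Conversely, an isomorphism with a permutation representation yields a permuted basis. -/
theorem basisOfIso (V : Type) [AddCommGroup V] [Module k V]
    (P : V ≃ₗ[k] V) (κ : Type) [Fintype κ] (τ : Equiv.Perm κ)
    (i : repOf k V P ≅ permRep k κ τ) :
    ∃ b : Module.Basis κ k V, ∀ x, P (b x) = b (τ x) := by
  classical
  let e : V ≃ₗ[k] (κ → k) := LinearEquiv.ofLinear i.hom.hom.toLinearMap i.inv.hom.toLinearMap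
    (LinearMap.ext fun v =>
      congrArg (fun (f : permRep k κ τ ⟶ permRep k κ τ) => f.hom v) i.inv_hom_id)
    (LinearMap.ext fun v =>
      congrArg (fun (f : repOf k V P ⟶ repOf k V P) => f.hom v) i.hom_inv_id)
  refine ⟨Module.Basis.ofEquivFun e, fun x => ?_⟩
  apply e.injective
  have hcomm : e (P ((Module.Basis.ofEquivFun e) x))
      = (permRep k κ τ).ρ (Multiplicative.ofAdd 1) (e ((Module.Basis.ofEquivFun e) x)) := by
    rw [← repOf_ρ_apply k V P]
    exact Rep.hom_comm_apply i.hom (Multiplicative.ofAdd 1) _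
  rw [hcomm, permRep_ρ_apply]
  have hb : ∀ y : κ, e ((Module.Basis.ofEquivFun e) y) = Pi.single y 1 := by
    intro y
    have : (Module.Basis.ofEquivFun e) y = e.symm (Pi.single y 1) := by
      rw [Module.Basis.coe_ofEquivFun]
    rw [this, e.apply_symm_apply]
  rw [hb, hb]
  funext j
  simp only [Function.comp_apply, Pi.single_apply]
  simp [Equiv.symm_apply_eq, Equiv.eq_symm_apply]

/-- Transport of permutation representations along an equivalence. -/
noncomputable def permRepCongr (ι κ : Type) (σ : Equiv.Perm ι) (e : ι ≃ κ) :
    permRep k ι σ ≅ permRep k κ (e.permCongr σ) := by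
  refine mkIso k _ _ (LinearEquiv.funCongrLeft k k e.symm) (fun f => ?_)
  erw [permRep_ρ_apply, permRep_ρ_apply]
  funext x
  show f (σ.symm (e.symm x)) = f (e.symm ((e.permCongr σ).symm x))
  congr 1
  simp [Equiv.permCongr, Equiv.equivCongr]

end Aux

section Biprod

variable (k : Type) [Field k]
variable (J : Type) [Fintype J] [DecidableEq J] (κ : J → Type) (τ : ∀ j, Equiv.Perm (κ j))

noncomputable def extendLM (j : J) : ((κ j) → k) →ₗ[k] ((Σ l, κ l) → k) where
  toFun g := Function.extend (Sigma.mk j) g 0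
  map_add' g h := by
    funext p
    by_cases hp : ∃ a, Sigma.mk j a = p
    · obtain ⟨a, rfl⟩ := hp
      simp [sigma_mk_injective.extend_apply]
    · simp [Function.extend_apply' _ _ _ hp]
  map_smul' c g := by
    funext p
    by_cases hp : ∃ a, Sigma.mk j a = p
    · obtain ⟨a, rfl⟩ := hp
      simp [sigma_mk_injective.extend_apply]
    · simp [Function.extend_apply' _ _ _ hp]

noncomputable def restrictHom (j : J) :
    permRep k (Σ l, κ l) (Equiv.sigmaCongrRight τ) ⟶ permRep k (κ j) (τ j) :=
  mkHom k _ _ (LinearMap.funLeft k k (Sigma.mk j)) (fun f => by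
    erw [permRep_ρ_apply, permRep_ρ_apply]
    funext x
    show f ((Equiv.sigmaCongrRight τ).symm ⟨j, x⟩) = f ⟨j, (τ j).symm x⟩
    simp)

noncomputable def incHom (j : J) :
    permRep k (κ j) (τ j) ⟶ permRep k (Σ l, κ l) (Equiv.sigmaCongrRight τ) :=
  mkHom k _ _ (extendLM k J κ j) (fun g => by
    erw [permRep_ρ_apply, permRep_ρ_apply]
    funext p
    obtain ⟨l, y⟩ := p
    show Function.extend (Sigma.mk j) (g ∘ (τ j).symm) 0 ⟨l, y⟩
      = Function.extend (Sigma.mk j) g 0 ((Equiv.sigmaCongrRight τ).symm ⟨l, y⟩)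
    by_cases hl : l = j
    · subst hl
      rw [sigma_mk_injective.extend_apply]
      have : (Equiv.sigmaCongrRight τ).symm ⟨l, y⟩ = ⟨l, (τ l).symm y⟩ := by simp
      erw [this, sigma_mk_injective.extend_apply]
      rfl
    · have h1 : ¬∃ a, Sigma.mk j a = ⟨l, y⟩ := by
        rintro ⟨a, ha⟩
        exact hl (congrArg Sigma.fst ha).symm
      have : (Equiv.sigmaCongrRight τ).symm ⟨l, y⟩ = ⟨l, (τ l).symm y⟩ := by simp
      rw [this]
      have h2 : ¬∃ a, Sigma.mk j a = Sigma.mk l ((τ l).symm y) := by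
        rintro ⟨a, ha⟩
        exact hl (congrArg Sigma.fst ha).symm
      erw [Function.extend_apply' _ _ _ h1, Function.extend_apply' _ _ _ h2]
      rfl)

noncomputable def sigmaIso :
    permRep k (Σ l, κ l) (Equiv.sigmaCongrRight τ) ≅ ⨁ (fun j => permRep k (κ j) (τ j)) where
  hom := biproduct.lift (restrictHom k J κ τ)
  inv := biproduct.desc (incHom k J κ τ)
  hom_inv_id := by
    rw [biproduct.lift_desc]
    apply Rep.hom_ext
    show (Finset.univ.sum fun j => restrictHom k J κ τ j ≫ incHom k J κ τ j).hom = _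
    rw [Rep.sum_hom]
    apply Representation.IntertwiningMap.ext
    apply LinearMap.ext
    intro f
    funext p
    obtain ⟨l, y⟩ := p
    have happ : (Finset.univ.sum fun j => (restrictHom k J κ τ j ≫ incHom k J κ τ j).hom) f ⟨l, y⟩
        = Finset.univ.sum fun j =>
            ((restrictHom k J κ τ j ≫ incHom k J κ τ j).hom f ⟨l, y⟩ : k) := by
      erw [Representation.IntertwiningMap.sum_apply, Finset.sum_apply]
    show (Finset.univ.sum fun j => (restrictHom k J κ τ j ≫ incHom k J κ τ j).hom) f ⟨l, y⟩ = f ⟨l, y⟩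
    rw [happ]
    have hterm : ∀ j : J, ((restrictHom k J κ τ j ≫ incHom k J κ τ j).hom f ⟨l, y⟩ : k)
        = Function.extend (Sigma.mk j) (f ∘ Sigma.mk j) 0 ⟨l, y⟩ := fun j => rfl
    rw [Finset.sum_congr rfl (fun j _ => hterm j)]
    rw [Finset.sum_eq_single l]
    · rw [sigma_mk_injective.extend_apply]
      rfl
    · intro j _ hj
      have h1 : ¬∃ a, Sigma.mk j a = ⟨l, y⟩ := by
        rintro ⟨a, ha⟩
        exact hj (congrArg Sigma.fst ha)
      rw [Function.extend_apply' _ _ _ h1]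
      rfl
    · intro h
      exact absurd (Finset.mem_univ l) h
  inv_hom_id := by
    apply biproduct.hom_ext
    intro j'
    rw [Category.assoc, biproduct.lift_π, Category.id_comp]
    apply biproduct.hom_ext'
    intro j
    rw [biproduct.ι_desc_assoc, biproduct.ι_π]
    by_cases hjj : j = j'
    · subst hjj
      rw [dif_pos rfl]
      apply Rep.hom_ext
      apply Representation.IntertwiningMap.ext
      apply LinearMap.ext
      intro g
      show (LinearMap.funLeft k k (Sigma.mk j)) (Function.extend (Sigma.mk j) g 0) = _
      funext x
      show Function.extend (Sigma.mk j) g 0 ⟨j, x⟩ = _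
      erw [sigma_mk_injective.extend_apply]
      rfl
    · rw [dif_neg hjj]
      apply Rep.hom_ext
      apply Representation.IntertwiningMap.ext
      apply LinearMap.ext
      intro g
      funext x
      show Function.extend (Sigma.mk j) g 0 ⟨j', x⟩ = _
      have h1 : ¬∃ a, Sigma.mk j a = ⟨j', x⟩ := by
        rintro ⟨a, ha⟩
        exact hjj (congrArg Sigma.fst ha)
      erw [Function.extend_apply' _ _ _ h1]
      rfl

end Biprod

section Decomp

theorem perm_decomp (ι : Type) [Fintype ι] (σ : Equiv.Perm ι) :
    ∃ (r : ℕ) (d : Fin r → ℕ), (∀ i, 0 < d i) ∧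
      ∃ E : ι ≃ (Σ i : Fin r, ZMod (d i)), ∀ x, E (σ x) = ⟨(E x).1, (E x).2 + 1⟩ := by
  classical
  letI : Fintype (MulAction.orbitRel.Quotient (Subgroup.zpowers σ) ι) := Fintype.ofFinite _
  set Ω := MulAction.orbitRel.Quotient (Subgroup.zpowers σ) ι with hΩ
  set n : Ω → ℕ := fun ω => Function.minimalPeriod (σ • ·) ω.out with hn
  set E0 : ι ≃ Σ ω : Ω, ZMod (n ω) :=
    (MulAction.selfEquivSigmaOrbits (Subgroup.zpowers σ) ι).trans
      (Equiv.sigmaCongrRight fun ω => MulAction.orbitZPowersEquiv σ ω.out) with hE0def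
  have step : ∀ (b : ι) (m : ZMod (Function.minimalPeriod (σ • ·) b)),
      (MulAction.orbitZPowersEquiv σ b).symm (m + 1)
        = (⟨σ, Subgroup.mem_zpowers σ⟩ : Subgroup.zpowers σ) •
            (MulAction.orbitZPowersEquiv σ b).symm m := by
    intro b m
    have h1 : m + 1 = ((1 + (ZMod.cast m : ℤ) : ℤ) : ZMod (Function.minimalPeriod (σ • ·) b)) := by
      push_cast
      ring
    rw [h1, MulAction.orbitZPowersEquiv_symm_apply', MulAction.orbitZPowersEquiv_symm_apply,
      zpow_add, zpow_one, mul_smul]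
  have hsub : ∀ (ω : Ω) (m : ZMod (n ω)),
      E0.symm ⟨ω, m⟩ = ((MulAction.orbitZPowersEquiv σ ω.out).symm m : ι) := fun ω m => rfl
  have hsymm : ∀ (ω : Ω) (m : ZMod (n ω)), E0.symm ⟨ω, m + 1⟩ = σ (E0.symm ⟨ω, m⟩) := by
    intro ω m
    rw [hsub, hsub, step]
    rfl
  have hE0 : ∀ x, E0 (σ x) = ⟨(E0 x).1, (E0 x).2 + 1⟩ := by
    intro x
    have h1 : E0.symm ⟨(E0 x).1, (E0 x).2 + 1⟩ = σ (E0.symm ⟨(E0 x).1, (E0 x).2⟩) := hsymm _ _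
    have h2 : (⟨(E0 x).1, (E0 x).2⟩ : Σ ω : Ω, ZMod (n ω)) = E0 x := rfl
    rw [h2, E0.symm_apply_apply] at h1
    rw [← h1, E0.apply_symm_apply]
  have hpos : ∀ ω : Ω, 0 < n ω := fun ω => Nat.pos_of_ne_zero (NeZero.ne _)
  let e : Fin (Fintype.card Ω) ≃ Ω := (Fintype.equivFin Ω).symm
  refine ⟨Fintype.card Ω, fun i => n (e i), fun i => hpos (e i), ?_⟩
  let F : (Σ i : Fin (Fintype.card Ω), ZMod (n (e i))) ≃ Σ ω : Ω, ZMod (n ω) :=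
    Equiv.sigmaCongrLeft (β := fun ω : Ω => ZMod (n ω)) e
  refine ⟨E0.trans F.symm, ?_⟩
  intro x
  show F.symm (E0 (σ x)) = ⟨(F.symm (E0 x)).1, (F.symm (E0 x)).2 + 1⟩
  rw [hE0 x]
  generalize E0 x = p
  obtain ⟨ω, m⟩ := p
  obtain ⟨i, rfl⟩ := e.surjective ω
  have hF : ∀ m' : ZMod (n (e i)), F.symm ⟨e i, m'⟩ = ⟨i, m'⟩ := by
    intro m'
    apply F.injective
    rw [F.apply_symm_apply]
    rfl
  rw [hF, hF]

end Decomp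

/-- An invertible linear endomorphism `P` of a finite-dimensional vector space `V` is
represented by a permutation matrix in some basis (i.e. `P` permutes the vectors of some
basis of `V`) if and only if the corresponding representation of `Multiplicative ℤ` on `V`
decomposes as a finite direct sum `⊕ᵢ M(nᵢ)` with all `nᵢ` positive. -/
theorem permutes_basis_iff_iso_biproduct_M
    (k : Type) [Field k] (V : Type) [AddCommGroup V] [Module k V] [FiniteDimensional k V]
    (P : V ≃ₗ[k] V) :
    (∃ (ι : Type) (_ : Fintype ι) (b : Module.Basis ι k V) (σ : Equiv.Perm ι),
        ∀ i, P (b i) = b (σ i)) ↔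
      ∃ (r : ℕ) (d : Fin r → ℕ), (∀ i, 0 < d i) ∧
        Nonempty (repOf k V P ≅ ⨁ fun i => M k (d i)) := by
  constructor
  · rintro ⟨ι, _, b, σ, hb⟩
    obtain ⟨r, d, hd, E, hE⟩ := perm_decomp ι σ
    refine ⟨r, d, hd, ⟨?_⟩⟩
    have hperm : E.permCongr σ = Equiv.sigmaCongrRight (fun _ : Fin r => Equiv.addRight 1) := by
      apply Equiv.ext
      intro p
      obtain ⟨x, rfl⟩ := E.surjective p
      rw [Equiv.permCongr_apply, Equiv.symm_apply_apply, hE x]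
      rfl
    refine (isoOfBasis k V P ι b σ hb) ≪≫ (permRepCongr k ι _ σ E) ≪≫ ?_
    rw [hperm]
    exact (sigmaIso k (Fin r) (fun i => ZMod (d i)) (fun _ => Equiv.addRight 1)) ≪≫
      (biproduct.mapIso (fun i => (MIsoPermRep k (d i)).symm))
  · rintro ⟨r, d, hd, ⟨iso⟩⟩
    haveI : ∀ i, NeZero (d i) := fun i => ⟨(hd i).ne'⟩
    have iso2 : repOf k V P ≅
        permRep k (Σ i : Fin r, ZMod (d i)) (Equiv.sigmaCongrRight (fun _ => Equiv.addRight 1)) :=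
      iso ≪≫ (biproduct.mapIso (fun i => MIsoPermRep k (d i))) ≪≫
        (sigmaIso k (Fin r) (fun i => ZMod (d i)) (fun _ => Equiv.addRight 1)).symm
    obtain ⟨b, hb⟩ := basisOfIso k V P _ _ iso2
    exact ⟨_, inferInstance, b, _, hb⟩
end

section
/- Let G₁ = Q₈ × C₂ be the direct product of the quaternion group of order 8 with the cyclic group of order 2, and let G₂ be the semidirect product of a cyclic group of order 4 by a cyclic group of order 4 in which the acting generator acts by inversion (i.e., G₂ = ⟨x, y | x⁴ = y⁴ = 1, y x y⁻¹ = x⁻¹⟩). Then for every positive integer n, the number of elements of order n in G₁ equals the number of elements of order n in G₂, yet G₁ and G₂ are not isomorphic as groups. -/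
/-- The homomorphism from `Multiplicative (ZMod n)` to a group `G` sending the generator to
an element `g` with `g ^ n = 1`. -/
def cyclicHom (n : ℕ) [NeZero n] {G : Type*} [Group G] (g : G) (hg : g ^ n = 1) :
    Multiplicative (ZMod n) →* G where
  toFun a := g ^ (a.toAdd.val)
  map_one' := by simp
  map_mul' x y := by
    have key : ∀ m : ℕ, g ^ (m % n) = g ^ m := fun m => by
      conv_rhs => rw [← Nat.mod_add_div m n, pow_add, pow_mul, hg, one_pow, mul_one]
    show g ^ ((x.toAdd + y.toAdd).val) = _
    rw [ZMod.val_add, key, pow_add]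

/-- The inversion automorphism of `Multiplicative (ZMod 4)`. -/
def invAut : MulAut (Multiplicative (ZMod 4)) := MulEquiv.inv (Multiplicative (ZMod 4))

lemma invAut_pow_four : invAut ^ 4 = 1 := by
  have h2 : invAut ^ 2 = 1 := by
    ext x
    simp [invAut, sq]
  have h4 : invAut ^ 4 = (invAut ^ 2) ^ 2 := by rw [← pow_mul]
  rw [h4, h2, one_pow]

/-- The action of `Multiplicative (ZMod 4)` on itself in which the generator acts by
inversion. -/
def φ : Multiplicative (ZMod 4) →* MulAut (Multiplicative (ZMod 4)) :=
  cyclicHom 4 invAut invAut_pow_four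

/-- `G₂ = ⟨x, y | x⁴ = y⁴ = 1, y x y⁻¹ = x⁻¹⟩`. -/
abbrev G₂ := SemidirectProduct (Multiplicative (ZMod 4)) (Multiplicative (ZMod 4)) φ

/-- `G₁ = Q₈ × C₂`. -/
abbrev G₁ := QuaternionGroup 2 × Multiplicative (ZMod 2)

/-- The underlying type of `G₂` is equivalent to a product. -/
def sdpEquiv : G₂ ≃ (Multiplicative (ZMod 4) × Multiplicative (ZMod 4)) where
  toFun g := (g.left, g.right)
  invFun p := ⟨p.1, p.2⟩
  left_inv _ := rfl
  right_inv _ := rfl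

instance : Fintype G₂ := Fintype.ofEquiv _ sdpEquiv.symm

/-- Counting elements of a given order via a decidable predicate. -/
lemma count_orderOf {G : Type*} [Group G] [Fintype G] [DecidableEq G] (n : ℕ) (hn : 0 < n) :
    Nat.card {g : G | orderOf g = n} =
      Fintype.card {g : G // g ^ n = 1 ∧ ∀ m, m < n → 0 < m → g ^ m ≠ 1} := by
  have e : {g : G | orderOf g = n} ≃
      {g : G // g ^ n = 1 ∧ ∀ m, m < n → 0 < m → g ^ m ≠ 1} :=
    Equiv.subtypeEquivRight fun g => orderOf_eq_iff hn
  rw [Nat.card_congr e, Nat.card_eq_fintype_card]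

/-- For every positive integer `n`, the groups `G₁ = Q₈ × C₂` and
`G₂ = ⟨x, y | x⁴ = y⁴ = 1, y x y⁻¹ = x⁻¹⟩` have the same number of elements of order `n`,
yet `G₁` and `G₂` are not isomorphic. -/
theorem G₁_G₂_same_order_statistics_not_isomorphic :
    (∀ n : ℕ, 0 < n →
      Nat.card {g : G₁ | orderOf g = n} = Nat.card {g : G₂ | orderOf g = n}) ∧
      IsEmpty (G₁ ≃* G₂) := by
  constructor
  · intro n hn
    rw [count_orderOf n hn, count_orderOf n hn]
    by_cases h16 : n ≤ 16
    · interval_cases n <;> decide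
    · push_neg at h16
      have empty : ∀ (G : Type) [Group G] [Fintype G] [DecidableEq G],
          Fintype.card G = 16 →
          Fintype.card {g : G // g ^ n = 1 ∧ ∀ m, m < n → 0 < m → g ^ m ≠ 1} = 0 := by
        intro G _ _ _ hG
        rw [Fintype.card_eq_zero_iff]
        constructor
        rintro ⟨g, hg1, hg2⟩
        have hd : orderOf g ∣ 16 := hG ▸ orderOf_dvd_card
        have hpos : 0 < orderOf g := orderOf_pos g
        have hle : orderOf g ≤ 16 := Nat.le_of_dvd (by norm_num) hd
        exact hg2 (orderOf g) (lt_of_le_of_lt hle h16) hpos (pow_orderOf_eq_one g)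
      rw [empty G₁ (by decide), empty G₂ (by decide)]
  · constructor
    intro e
    have key : ∀ g : G₁, (∃ h, h * h = g) ↔ (∃ h : G₂, h * h = e g) := by
      intro g
      constructor
      · rintro ⟨h, rfl⟩
        exact ⟨e h, (map_mul e h h).symm⟩
      · rintro ⟨h, hh⟩
        refine ⟨e.symm h, e.injective ?_⟩
        rw [map_mul, e.apply_symm_apply, hh]
    have hcard := Fintype.card_congr (Equiv.subtypeEquiv (p := fun g : G₁ => ∃ h, h * h = g) (q := fun g : G₂ => ∃ h, h * h = g) e.toEquiv key)
    have h1 : Fintype.card {g : G₁ // ∃ h, h * h = g} = 2 := by decide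
    have h2 : Fintype.card {g : G₂ // ∃ h, h * h = g} = 3 := by decide
    rw [h1, h2] at hcard
    exact absurd hcard (by norm_num)
end
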